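/- arXiv:2305.00164 — 5 statements merged into one kernel-verified Lean document; each statement's English description precedes it below -/
import Mathlib

section
/- For f(t) = |t - 1/2|^k on [0,1] with k ≥ 1, the water-filling depth satisfies ρ_m(ε; f) = ((2k+1)(k+1)/(4k^2))^{k/(2k+1)} · ε^{2k/(2k+1)}, whenever this value does not exceed the range making the level set stay inside [0,1]. -/
open MeasureTheory Set

/-- L2 distance between two functions on [0,1]. -/
noncomputable def L2 (f g : ℝ → ℝ) : ℝ :=
  Real.sqrt (∫ t in (0:ℝ)..1, (f t - g t) ^ 2)

/-- Truncation f_u(t) = max{f(t), u}. -/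
def trunc (f : ℝ → ℝ) (u : ℝ) : ℝ → ℝ := fun t => max (f t) u

/-- z is the unique minimizer of f on [0,1]. -/
def UniqueMinOn (f : ℝ → ℝ) (z : ℝ) : Prop :=
  z ∈ Icc (0:ℝ) 1 ∧ ∀ t ∈ Icc (0:ℝ) 1, t ≠ z → f z < f t

/-- Water-filling depth ρ_m(ε; f), where Mf is the minimum of f. -/
noncomputable def rhoM (ε : ℝ) (f : ℝ → ℝ) (Mf : ℝ) : ℝ :=
  sSup {v | ∃ u, v = u - Mf ∧ L2 f (trunc f u) ≤ ε}

/-- Water-filling width ρ_z(ε; f), where Zf is the minimizer and Mf the minimum of f. -/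
noncomputable def rhoZ (ε : ℝ) (f : ℝ → ℝ) (Zf Mf : ℝ) : ℝ :=
  sSup {v | ∃ t ∈ Icc (0:ℝ) 1, v = |t - Zf| ∧ f t ≤ rhoM ε f Mf + Mf}

/-- Local modulus of continuity of the minimum. -/
noncomputable def omegaM (ε : ℝ) (f : ℝ → ℝ) (Mf : ℝ) : ℝ :=
  sSup {v | ∃ g zg, ConvexOn ℝ (Icc (0:ℝ) 1) g ∧ UniqueMinOn g zg ∧
    L2 f g ≤ ε ∧ v = |Mf - g zg|}

/-- Local modulus of continuity of the minimizer. -/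
noncomputable def omegaZ (ε : ℝ) (f : ℝ → ℝ) (Zf : ℝ) : ℝ :=
  sSup {v | ∃ g zg, ConvexOn ℝ (Icc (0:ℝ) 1) g ∧ UniqueMinOn g zg ∧
    L2 f g ≤ ε ∧ v = |Zf - zg|}

lemma mid_integral (k a : ℝ) (hk : 1 ≤ k) (ha : 0 < a) :
    ∫ s in (0:ℝ)..a, (a ^ k - s ^ k) ^ 2
      = (2 * k ^ 2 / ((k + 1) * (2 * k + 1))) * a ^ (2 * k + 1) := by
  have hk0 : (0:ℝ) < k := by linarith
  have hcongr : Set.EqOn (fun s : ℝ => (a ^ k - s ^ k) ^ 2)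
      (fun s : ℝ => a ^ (2*k) - 2 * a ^ k * s ^ k + s ^ (2*k)) (Set.uIcc 0 a) := by
    intro s hs
    rw [Set.uIcc_of_le ha.le] at hs
    have e1 : (a ^ k) ^ 2 = a ^ (2*k) := by
      rw [← Real.rpow_two, ← Real.rpow_mul ha.le, mul_comm]
    have e2 : (s ^ k) ^ 2 = s ^ (2*k) := by
      rw [← Real.rpow_two, ← Real.rpow_mul hs.1, mul_comm]
    simp only
    linear_combination e1 + e2
  rw [intervalIntegral.integral_congr hcongr]
  have i1 : IntervalIntegrable (fun s : ℝ => s ^ k) volume 0 a :=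
    intervalIntegral.intervalIntegrable_rpow' (by linarith)
  have i2 : IntervalIntegrable (fun s : ℝ => s ^ (2*k)) volume 0 a :=
    intervalIntegral.intervalIntegrable_rpow' (by linarith)
  rw [intervalIntegral.integral_add ((_root_.intervalIntegrable_const).sub (i1.const_mul _)) i2,
    intervalIntegral.integral_sub _root_.intervalIntegrable_const (i1.const_mul _),
    intervalIntegral.integral_const, intervalIntegral.integral_const_mul,
    integral_rpow (Or.inl (by linarith : (-1:ℝ) < k)),
    integral_rpow (Or.inl (by linarith : (-1:ℝ) < 2*k))]
  rw [Real.zero_rpow (by linarith : k + 1 ≠ 0), Real.zero_rpow (by linarith : 2*k + 1 ≠ 0)]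
  have e3 : a * a ^ (2*k) = a ^ (2*k+1) := by
    nth_rewrite 1 [show a = a ^ (1:ℝ) from (Real.rpow_one a).symm]
    rw [← Real.rpow_add ha]; ring_nf
  have e4 : a ^ k * a ^ (k+1) = a ^ (2*k+1) := by
    rw [← Real.rpow_add ha]; ring_nf
  have hne1 : k + 1 ≠ 0 := by linarith
  have hne2 : 2*k + 1 ≠ 0 := by linarith
  simp only [smul_eq_mul, sub_zero]
  field_simp
  linear_combination ((k+1)*(2*k+1)) * e3 - (2*(2*k+1)) * e4 * 1

lemma alg_half (k ε : ℝ) (hk : 0 < k) :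
    2 * k ^ 2 / ((k + 1) * (2 * k + 1)) * ((2*k+1) * (k+1) / (4 * k ^ 2) * ε ^ 2)
      = ε ^ 2 / 2 := by
  have h1 : (k:ℝ) + 1 ≠ 0 := by linarith
  have h2 : 2*k + 1 ≠ 0 := by linarith
  have h3 : (k:ℝ) ≠ 0 := ne_of_gt hk
  field_simp
  ring

/-- ρ_m(ε; f) for f(t) = |t-1/2|^k, when the water level stays within range. -/
theorem stmt1 (k ε : ℝ) (hk : 1 ≤ k) (hε : 0 < ε)
    (hsmall : ((((2*k+1) * (k+1)) / (4 * k ^ 2)) ^ (k/(2*k+1)) *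
        ε ^ ((2*k)/(2*k+1))) ^ (1/k) ≤ 1/2) :
    rhoM ε (fun t => |t - 1/2| ^ k) 0 =
      (((2*k+1) * (k+1)) / (4 * k ^ 2)) ^ (k/(2*k+1)) * ε ^ ((2*k)/(2*k+1)) := by
  have hk0 : (0:ℝ) < k := by linarith
  set f : ℝ → ℝ := fun t => |t - 1/2| ^ k with hfdef
  have hft : ∀ t, f t = |t - 1/2| ^ k := fun t => rfl
  set B : ℝ := ((2*k+1) * (k+1)) / (4 * k ^ 2) with hBdef
  have hB : 0 < B := by
    apply div_pos <;> nlinarith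
  set U : ℝ := B ^ (k/(2*k+1)) * ε ^ ((2*k)/(2*k+1)) with hUdef
  have hU0 : 0 < U := mul_pos (Real.rpow_pos_of_pos hB _) (Real.rpow_pos_of_pos hε _)
  set a : ℝ := U ^ (1/k) with hadef
  have ha0 : 0 < a := Real.rpow_pos_of_pos hU0 _
  have hahalf : a ≤ 1/2 := hsmall
  have hak : a ^ k = U := by
    rw [hadef, ← Real.rpow_mul hU0.le, one_div, inv_mul_cancel₀ (ne_of_gt hk0), Real.rpow_one]
  -- a^(2k+1) = B * ε²
  have hA : a ^ (2*k+1) = B * ε ^ 2 := by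
    rw [hadef, ← Real.rpow_mul hU0.le, hUdef,
      Real.mul_rpow (Real.rpow_pos_of_pos hB _).le (Real.rpow_pos_of_pos hε _).le,
      ← Real.rpow_mul hB.le, ← Real.rpow_mul hε.le]
    have h1 : k/(2*k+1) * (1/k*(2*k+1)) = 1 := by
      field_simp
    have h2 : (2*k)/(2*k+1) * (1/k*(2*k+1)) = 2 := by
      field_simp
    rw [h1, h2, Real.rpow_one, Real.rpow_two]
  clear_value B U a
  -- continuity
  have hfc : Continuous f := by
    apply Continuous.rpow_const (continuous_abs.comp (continuous_id.sub continuous_const))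
    exact fun t => Or.inr hk0.le
  have hgcont : ∀ u : ℝ, Continuous fun t => max (u - f t) 0 ^ 2 :=
    fun u => ((continuous_const.sub hfc).max continuous_const).pow 2
  -- L2 in terms of I
  have hL2 : ∀ u, L2 f (trunc f u)
      = Real.sqrt (∫ t in (0:ℝ)..1, max (u - f t) 0 ^ 2) := by
    intro u
    simp only [L2, trunc]
    congr 1
    apply intervalIntegral.integral_congr
    intro t _
    try dsimp only
    rcases le_total (f t) u with h | h
    · rw [max_eq_right h, max_eq_left (by linarith)]; ring
    · rw [max_eq_left h, max_eq_right (by linarith)]; ring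
  -- split
  have hsplit : ∀ u : ℝ, (∫ t in (0:ℝ)..1, max (u - f t) 0 ^ 2)
      = (∫ t in (0:ℝ)..(1/2 - a), max (u - f t) 0 ^ 2)
        + (∫ t in (1/2 - a)..(1/2 + a), max (u - f t) 0 ^ 2)
        + (∫ t in (1/2 + a)..(1:ℝ), max (u - f t) 0 ^ 2) := by
    intro u
    have h1 := intervalIntegral.integral_add_adjacent_intervals (μ := volume)
      (a := (1/2 - a : ℝ)) (b := (1/2 + a : ℝ)) (c := (1:ℝ))
      ((hgcont u).intervalIntegrable _ _) ((hgcont u).intervalIntegrable _ _)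
    have h2 := intervalIntegral.integral_add_adjacent_intervals (μ := volume)
      (a := (0:ℝ)) (b := (1/2 - a : ℝ)) (c := (1:ℝ))
      ((hgcont u).intervalIntegrable _ _) ((hgcont u).intervalIntegrable _ _)
    linarith
  -- f ≤ U on middle interval
  have hfle : ∀ t ∈ Icc (1/2 - a) (1/2 + a), f t ≤ U := by
    intro t ht
    have h2 : |t - 1/2| ≤ a := by
      rw [abs_le]; constructor <;> [linarith [ht.1]; linarith [ht.2]]
    rw [hft]
    calc |t - 1/2| ^ k ≤ a ^ k := Real.rpow_le_rpow (abs_nonneg _) h2 hk0.le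
      _ = U := hak
  -- outer pieces vanish at level U
  have hout1 : (∫ t in (0:ℝ)..(1/2 - a), max (U - f t) 0 ^ 2) = 0 := by
    have hco : Set.EqOn (fun t => max (U - f t) 0 ^ 2) (fun _ => (0:ℝ))
        (Set.uIcc 0 (1/2 - a)) := by
      intro t ht
      rw [Set.uIcc_of_le (by linarith)] at ht
      have h2 : a ≤ |t - 1/2| := by
        rw [abs_of_nonpos (by linarith [ht.2])]; linarith [ht.2]
      have h3 : U ≤ f t := by
        rw [hft]
        calc U = a ^ k := hak.symm
          _ ≤ |t - 1/2| ^ k := Real.rpow_le_rpow ha0.le h2 hk0.le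
      simp [max_eq_right (by linarith : U - f t ≤ 0)]
    rw [intervalIntegral.integral_congr hco, intervalIntegral.integral_zero]
  have hout2 : (∫ t in (1/2 + a)..(1:ℝ), max (U - f t) 0 ^ 2) = 0 := by
    have hco : Set.EqOn (fun t => max (U - f t) 0 ^ 2) (fun _ => (0:ℝ))
        (Set.uIcc (1/2 + a) 1) := by
      intro t ht
      rw [Set.uIcc_of_le (by linarith)] at ht
      have h2 : a ≤ |t - 1/2| := by
        rw [abs_of_nonneg (by linarith [ht.1])]; linarith [ht.1]
      have h3 : U ≤ f t := by
        rw [hft]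
        calc U = a ^ k := hak.symm
          _ ≤ |t - 1/2| ^ k := Real.rpow_le_rpow ha0.le h2 hk0.le
      simp [max_eq_right (by linarith : U - f t ≤ 0)]
    rw [intervalIntegral.integral_congr hco, intervalIntegral.integral_zero]
  -- middle piece at level U
  have hmidU : (∫ t in (1/2 - a)..(1/2 + a), max (U - f t) 0 ^ 2) = ε ^ 2 := by
    have h1 : (∫ t in (1/2 - a)..(1/2 + a), max (U - f t) 0 ^ 2)
        = ∫ t in (1/2 - a)..(1/2 + a), (U - |t - 1/2| ^ k) ^ 2 := by
      apply intervalIntegral.integral_congr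
      intro t ht
      rw [Set.uIcc_of_le (by linarith)] at ht
      have h3 := hfle t ht
      try dsimp only
      rw [max_eq_left (by linarith : (0:ℝ) ≤ U - f t), hft]
    have h2 : (∫ t in (1/2 - a)..(1/2 + a), (U - |t - 1/2| ^ k) ^ 2)
        = ∫ s in (-a)..a, (U - |s| ^ k) ^ 2 := by
      have h := intervalIntegral.integral_comp_sub_right
        (a := (1/2 - a : ℝ)) (b := (1/2 + a : ℝ))
        (fun s => (U - |s| ^ k) ^ 2) (1/2)
      rw [show (1/2 - a - 1/2 : ℝ) = -a by ring, show (1/2 + a - 1/2 : ℝ) = a by ring] at h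
      exact h
    have h3 : (∫ s in (-a)..(0:ℝ), (U - |s| ^ k) ^ 2)
        = ∫ s in (0:ℝ)..a, (U - |s| ^ k) ^ 2 := by
      have h := intervalIntegral.integral_comp_neg
        (a := (0:ℝ)) (b := a) (f := fun s => (U - |s| ^ k) ^ 2)
      simp only [abs_neg, neg_zero] at h
      exact h.symm
    have h4 : (∫ s in (-a)..a, (U - |s| ^ k) ^ 2)
        = (∫ s in (-a)..(0:ℝ), (U - |s| ^ k) ^ 2) + ∫ s in (0:ℝ)..a, (U - |s| ^ k) ^ 2 :=
      (intervalIntegral.integral_add_adjacent_intervals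
        ((((continuous_const.sub ((continuous_abs.rpow_const (fun t => Or.inr hk0.le)))).pow 2)).intervalIntegrable _ _)
        ((((continuous_const.sub ((continuous_abs.rpow_const (fun t => Or.inr hk0.le)))).pow 2)).intervalIntegrable _ _)).symm
    have h5 : (∫ s in (0:ℝ)..a, (U - |s| ^ k) ^ 2)
        = ∫ s in (0:ℝ)..a, (a ^ k - s ^ k) ^ 2 := by
      apply intervalIntegral.integral_congr
      intro s hs
      rw [Set.uIcc_of_le ha0.le] at hs
      try dsimp only
      rw [abs_of_nonneg hs.1, hak]
    have h6 := mid_integral k a hk ha0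
    have hne1 : (k:ℝ) + 1 ≠ 0 := by linarith
    have hne2 : 2*k + 1 ≠ 0 := by linarith
    have hkne : (k:ℝ) ≠ 0 := ne_of_gt hk0
    rw [h1, h2, h4, h3, h5, h6, hA, hBdef]
    linear_combination 2 * alg_half k ε hk0
  -- strict growth above U
  have hIgt : ∀ u, U < u → ε ^ 2 < ∫ t in (0:ℝ)..1, max (u - f t) 0 ^ 2 := by
    intro u hu
    have hnn1 : 0 ≤ ∫ t in (0:ℝ)..(1/2 - a), max (u - f t) 0 ^ 2 :=
      intervalIntegral.integral_nonneg (by linarith) (fun t _ => sq_nonneg _)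
    have hnn2 : 0 ≤ ∫ t in (1/2 + a)..(1:ℝ), max (u - f t) 0 ^ 2 :=
      intervalIntegral.integral_nonneg (by linarith) (fun t _ => sq_nonneg _)
    have hmono : (∫ t in (1/2 - a)..(1/2 + a), (max (U - f t) 0 ^ 2 + (u - U) ^ 2))
        ≤ ∫ t in (1/2 - a)..(1/2 + a), max (u - f t) 0 ^ 2 := by
      apply intervalIntegral.integral_mono_on (by linarith)
        (((hgcont U).add continuous_const).intervalIntegrable _ _)
        ((hgcont u).intervalIntegrable _ _)
      intro t ht
      have h3 := hfle t ht
      try dsimp only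
      simp only [Pi.add_apply]
      rw [max_eq_left (by linarith : (0:ℝ) ≤ U - f t),
        max_eq_left (by linarith : (0:ℝ) ≤ u - f t)]
      nlinarith [sub_nonneg.2 h3]
    have hconst : (∫ t in (1/2 - a)..(1/2 + a), (max (U - f t) 0 ^ 2 + (u - U) ^ 2))
        = (∫ t in (1/2 - a)..(1/2 + a), max (U - f t) 0 ^ 2) + (2*a) * (u - U) ^ 2 := by
      rw [intervalIntegral.integral_add ((hgcont U).intervalIntegrable _ _)
        _root_.intervalIntegrable_const, intervalIntegral.integral_const, smul_eq_mul,
        show (1/2 + a - (1/2 - a) : ℝ) = 2*a by ring]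
    have hpos : 0 < (2*a) * (u - U) ^ 2 :=
      mul_pos (by linarith) (pow_pos (by linarith) 2)
    rw [hsplit u]
    rw [hconst, hmidU] at hmono
    linarith
  -- conclude
  rw [rhoM]
  have hmem : U ∈ {v | ∃ u, v = u - 0 ∧ L2 f (trunc f u) ≤ ε} := by
    refine ⟨U, (sub_zero U).symm, ?_⟩
    have hIU : (∫ t in (0:ℝ)..1, max (U - f t) 0 ^ 2) = ε ^ 2 := by
      rw [hsplit U, hout1, hout2, hmidU]; ring
    rw [hL2 U, hIU, Real.sqrt_sq hε.le]
  have hub : ∀ v ∈ {v | ∃ u, v = u - 0 ∧ L2 f (trunc f u) ≤ ε}, v ≤ U := by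
    rintro v ⟨u, rfl, hle⟩
    rw [sub_zero]
    by_contra h
    push_neg at h
    have h2 := hIgt u h
    rw [hL2 u] at hle
    have h3 : Real.sqrt (ε ^ 2) < Real.sqrt (∫ t in (0:ℝ)..1, max (u - f t) 0 ^ 2) :=
      Real.sqrt_lt_sqrt (sq_nonneg ε) h2
    rw [Real.sqrt_sq hε.le] at h3
    linarith
  exact le_antisymm (csSup_le ⟨U, hmem⟩ hub) (le_csSup ⟨U, hub⟩ hmem)
end

section
/- For every convex f in F and every 0 < c < 1, the water-filling depth satisfies c ≤ ρ_m(cε; f)/ρ_m(ε; f) ≤ c^{2/3}. -/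
open MeasureTheory Set

noncomputable def WI (f : ℝ → ℝ) (u : ℝ) : ℝ := ∫ t in (0:ℝ)..1, (max (u - f t) 0)^2

section Aux
variable {f : ℝ → ℝ} {z : ℝ}
  (hf : ConvexOn ℝ (Icc (0:ℝ) 1) f) (hz : UniqueMinOn f z)

include hz in
lemma fmin : ∀ t ∈ Icc (0:ℝ) 1, f z ≤ f t := by
  intro t ht
  rcases eq_or_ne t z with h | h
  · rw [h]
  · exact (hz.2 t ht h).le

include hf hz in
lemma integ_aux (u a b : ℝ) (hmap : ∀ t ∈ Ioo (0:ℝ) 1, a*t+b ∈ Ioo (0:ℝ) 1) :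
    IntervalIntegrable (fun t => (max (u - f (a*t+b)) 0)^2) MeasureTheory.volume 0 1 := by
  rw [intervalIntegrable_iff_integrableOn_Ioc_of_le (by norm_num),
    integrableOn_Ioc_iff_integrableOn_Ioo]
  have hcont : ContinuousOn (fun t => (max (u - f (a*t+b)) 0)^2) (Ioo (0:ℝ) 1) := by
    have h1 : ContinuousOn f (Ioo (0:ℝ) 1) := by
      have := hf.continuousOn_interior
      rwa [interior_Icc] at this
    have h2 : ContinuousOn (fun t : ℝ => f (a*t+b)) (Ioo (0:ℝ) 1) :=
      h1.comp (Continuous.continuousOn (by continuity)) hmap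
    have h3 : ContinuousOn (fun t : ℝ => max (u - f (a*t+b)) 0) (Ioo (0:ℝ) 1) :=
      (continuous_id.max continuous_const).comp_continuousOn (continuousOn_const.sub h2)
    exact h3.pow 2
  refine ⟨hcont.aestronglyMeasurable measurableSet_Ioo, ?_⟩
  apply MeasureTheory.HasFiniteIntegral.restrict_of_bounded
    (C := (max (u - f z) 0)^2) (by simp)
  filter_upwards [MeasureTheory.ae_restrict_mem measurableSet_Ioo] with t ht
  have h1 : f z ≤ f (a*t+b) := fmin hz _ (Ioo_subset_Icc_self (hmap t ht))
  have h2 : max (u - f (a*t+b)) 0 ≤ max (u - f z) 0 :=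
    max_le_max (by linarith) le_rfl
  have h3 : (0:ℝ) ≤ max (u - f (a*t+b)) 0 := le_max_right _ _
  rw [Real.norm_eq_abs, abs_of_nonneg (by positivity)]
  nlinarith

include hf hz in
lemma integ_id (u : ℝ) :
    IntervalIntegrable (fun t => (max (u - f t) 0)^2) MeasureTheory.volume 0 1 := by
  have := integ_aux hf hz u 1 0 (by intro t ht; simpa using ht)
  simpa using this

lemma WI_nonneg (u : ℝ) : 0 ≤ WI f u :=
  intervalIntegral.integral_nonneg (by norm_num) (fun t _ => by positivity)

include hf hz in
lemma lemA {c v : ℝ} (hc0 : 0 < c) (hc1 : c ≤ 1) (hv : 0 ≤ v) :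
    WI f (f z + c*v) ≤ c^2 * WI f (f z + v) := by
  unfold WI
  rw [← intervalIntegral.integral_const_mul]
  apply intervalIntegral.integral_mono_on (by norm_num) (integ_id hf hz _)
  · exact (integ_id hf hz _).const_mul _
  intro t ht
  have h1 : f z ≤ f t := fmin hz t ht
  have h2 : max (f z + c*v - f t) 0 ≤ c * max (f z + v - f t) 0 := by
    rcases le_total (f z + v - f t) 0 with h | h
    · have : f z + c*v - f t ≤ 0 := by nlinarith
      rw [max_eq_right this, max_eq_right h]; simp
    · rw [max_eq_left h]
      apply max_le (by nlinarith) (by positivity)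
  have h3 : (0:ℝ) ≤ max (f z + c*v - f t) 0 := le_max_right _ _
  nlinarith

include hf hz in
lemma lemB {L v : ℝ} (hL : 1 ≤ L) (hv : 0 ≤ v) :
    WI f (f z + L*v) ≤ L^3 * WI f (f z + v) := by
  have hL0 : 0 < L := lt_of_lt_of_le one_pos hL
  have hz0 := hz.1.1
  have hz1 := hz.1.2
  obtain ⟨d, hd⟩ : ∃ d : ℝ, d = z - z/L := ⟨_, rfl⟩
  have hinv : 1/L ≤ 1 := by rw [div_le_one hL0]; exact hL
  have hinv0 : 0 < 1/L := by positivity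
  have hdz : 0 ≤ d := by rw [hd, sub_nonneg, div_le_iff₀ hL0]; nlinarith
  have hdz' : d ≤ 1 - 1/L := by
    rw [hd]
    have : z/L = z * (1/L) := by ring
    nlinarith [this]
  have hmap : ∀ t ∈ Ioo (0:ℝ) 1, (1/L)*t+d ∈ Ioo (0:ℝ) 1 := by
    intro t ht
    constructor
    · have : 0 < (1/L)*t := mul_pos hinv0 ht.1
      linarith
    · have h1 : (1/L)*t < 1/L := by
        rw [mul_lt_iff_lt_one_right hinv0]; exact ht.2
      linarith
  -- Step 1: pointwise domination
  have step1 : WI f (f z + L*v) ≤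
      ∫ t in (0:ℝ)..1, L^2 * (max (f z + v - f ((1/L)*t + d)) 0)^2 := by
    unfold WI
    apply intervalIntegral.integral_mono_on (by norm_num) (integ_id hf hz _)
    · exact (integ_aux hf hz _ _ _ hmap).const_mul _
    intro t ht
    obtain ⟨s, hs⟩ : ∃ s : ℝ, s = (1/L)*t + d := ⟨_, rfl⟩
    have hsmem : s ∈ Icc (0:ℝ) 1 := by
      constructor
      · have : 0 ≤ (1/L)*t := mul_nonneg hinv0.le ht.1
        rw [hs]; linarith
      · have : (1/L)*t ≤ 1/L := by nlinarith [ht.2]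
        rw [hs]; linarith
    -- convexity: f s ≤ (1 - 1/L) f z + (1/L) f t
    have hconv : f s ≤ (1 - 1/L) * f z + (1/L) * f t := by
      have hcv := hf.2 hz.1 ht (show (0:ℝ) ≤ 1 - 1/L by linarith)
        (show (0:ℝ) ≤ 1/L from hinv0.le) (by ring)
      have heq : (1 - 1/L) • z + (1/L) • t = s := by
        rw [hs, hd]; simp only [smul_eq_mul]; ring
      rw [heq, smul_eq_mul, smul_eq_mul] at hcv
      exact hcv
    have hkey : f z + L*v - f t ≤ L * (f z + v - f s) := by
      have h5 : L * f s ≤ (L - 1) * f z + f t := by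
        have h6 := mul_le_mul_of_nonneg_left hconv (le_of_lt hL0)
        calc L * f s ≤ L * ((1 - 1/L) * f z + (1/L) * f t) := h6
          _ = (L - 1) * f z + f t := by first | (field_simp; ring) | field_simp | ring_nf
      nlinarith
    have h2 : max (f z + L*v - f t) 0 ≤ L * max (f z + v - f s) 0 := by
      apply max_le _ (by positivity)
      calc f z + L*v - f t ≤ L * (f z + v - f s) := hkey
        _ ≤ L * max (f z + v - f s) 0 :=
            mul_le_mul_of_nonneg_left (le_max_left _ _) (le_of_lt hL0)
    have h3 : (0:ℝ) ≤ max (f z + L*v - f t) 0 := le_max_right _ _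
    rw [← hs]
    nlinarith
  -- Step 2: change of variables
  have step2 : (∫ t in (0:ℝ)..1, (max (f z + v - f (t/L + d)) 0)^2)
      = L • ∫ s in (0/L + d)..(1/L + d), (max (f z + v - f s) 0)^2 :=
    intervalIntegral.integral_comp_div_add (fun s => (max (f z + v - f s) 0)^2) (ne_of_gt hL0) d
  -- Step 3: interval inclusion
  have step3 : (∫ s in (0/L + d)..(1/L + d), (max (f z + v - f s) 0)^2)
      ≤ ∫ s in (0:ℝ)..1, (max (f z + v - f s) 0)^2 := by
    apply intervalIntegral.integral_mono_interval
    · simp only [zero_div, zero_add]; exact hdz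
    · simp only [zero_div]; linarith
    · linarith
    · filter_upwards with s; positivity
    · exact integ_id hf hz _
  calc WI f (f z + L*v)
      ≤ ∫ t in (0:ℝ)..1, L^2 * (max (f z + v - f ((1/L)*t + d)) 0)^2 := step1
    _ = L^2 * ∫ t in (0:ℝ)..1, (max (f z + v - f (t/L + d)) 0)^2 := by
        rw [← intervalIntegral.integral_const_mul]
        congr 1; ext t; rw [one_div, ← div_eq_inv_mul]
    _ = L^2 * (L • ∫ s in (0/L + d)..(1/L + d), (max (f z + v - f s) 0)^2) := by rw [step2]
    _ ≤ L^2 * (L * ∫ s in (0:ℝ)..1, (max (f z + v - f s) 0)^2) := by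
        rw [smul_eq_mul]
        apply mul_le_mul_of_nonneg_left _ (by positivity)
        exact mul_le_mul_of_nonneg_left step3 (le_of_lt hL0)
    _ = L^3 * WI f (f z + v) := by unfold WI; ring

lemma L2_eq_sqrt_WI (u : ℝ) : L2 f (trunc f u) = Real.sqrt (WI f u) := by
  unfold L2 WI trunc
  congr 1
  apply intervalIntegral.integral_congr
  intro t _
  show (f t - max (f t) u)^2 = (max (u - f t) 0)^2
  rcases le_total (f t) u with h | h
  · rw [max_eq_right h, max_eq_left (by linarith)]; ring
  · rw [max_eq_left h, max_eq_right (by linarith)]; ring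

include hz in
lemma mem_S_of {v e : ℝ} (he : 0 ≤ e) (hWI : WI f (f z + v) ≤ e^2) :
    v ∈ {v | ∃ u, v = u - f z ∧ L2 f (trunc f u) ≤ e} := by
  refine ⟨f z + v, by ring, ?_⟩
  rw [L2_eq_sqrt_WI]
  calc Real.sqrt (WI f (f z + v)) ≤ Real.sqrt (e^2) := Real.sqrt_le_sqrt hWI
    _ = e := by rw [Real.sqrt_sq he]

include hz in
lemma WI_le_of_mem {v e : ℝ} (hv : v ∈ {v | ∃ u, v = u - f z ∧ L2 f (trunc f u) ≤ e}) :
    WI f (f z + v) ≤ e^2 := by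
  obtain ⟨u, rfl, hu⟩ := hv
  rw [L2_eq_sqrt_WI] at hu
  have h0 : 0 ≤ WI f u := WI_nonneg u
  have heq : f z + (u - f z) = u := by ring
  rw [heq]
  calc WI f u = (Real.sqrt (WI f u))^2 := (Real.sq_sqrt h0).symm
    _ ≤ e^2 := by
        apply pow_le_pow_left₀ (Real.sqrt_nonneg _) hu

include hz in
lemma zero_mem_S {e : ℝ} (he : 0 ≤ e) :
    (0:ℝ) ∈ {v | ∃ u, v = u - f z ∧ L2 f (trunc f u) ≤ e} := by
  apply mem_S_of hz he
  have hWI0 : WI f (f z + 0) = 0 := by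
    unfold WI
    rw [add_zero]
    have : EqOn (fun t => (max (f z - f t) 0)^2) (fun _ => (0:ℝ)) (uIcc (0:ℝ) 1) := by
      intro t ht
      rw [uIcc_of_le (by norm_num)] at ht
      have := fmin hz t ht
      simp only [max_eq_right (by linarith : f z - f t ≤ 0)]
      norm_num
    rw [intervalIntegral.integral_congr this]
    simp
  rw [hWI0]; positivity

end Aux

/-- Proposition 2.1, first part. -/
theorem stmt2 (f : ℝ → ℝ) (z ε c : ℝ)
    (hf : ConvexOn ℝ (Icc (0:ℝ) 1) f) (hz : UniqueMinOn f z)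
    (hε : 0 < ε) (hc0 : 0 < c) (hc1 : c < 1)
    (hfin : BddAbove {v | ∃ u, v = u - f z ∧ L2 f (trunc f u) ≤ ε})
    (hpos : 0 < rhoM ε f (f z)) :
    c ≤ rhoM (c * ε) f (f z) / rhoM ε f (f z) ∧
      rhoM (c * ε) f (f z) / rhoM ε f (f z) ≤ c ^ ((2:ℝ)/3) := by
  have hcε : 0 < c * ε := mul_pos hc0 hε
  have hcεle : c * ε ≤ ε := by nlinarith
  set S : ℝ → Set ℝ := fun e => {v | ∃ u, v = u - f z ∧ L2 f (trunc f u) ≤ e} with hS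
  have hsub : S (c * ε) ⊆ S ε := by
    rintro v ⟨u, rfl, hu⟩
    exact ⟨u, rfl, hu.trans hcεle⟩
  have hbdd2 : BddAbove (S (c * ε)) := hfin.mono hsub
  have hne1 : (S ε).Nonempty := ⟨0, zero_mem_S hz hε.le⟩
  have hne2 : (S (c*ε)).Nonempty := ⟨0, zero_mem_S hz hcε.le⟩
  have hrho1 : rhoM ε f (f z) = sSup (S ε) := rfl
  have hrho2 : rhoM (c*ε) f (f z) = sSup (S (c*ε)) := rfl
  have hsup2_nonneg : 0 ≤ sSup (S (c*ε)) := le_csSup hbdd2 (zero_mem_S hz hcε.le)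
  -- Part 1
  have key1 : ∀ v ∈ S ε, c * v ≤ sSup (S (c*ε)) := by
    intro v hv
    rcases le_or_gt v 0 with h | h
    · have : c * v ≤ 0 := mul_nonpos_of_nonneg_of_nonpos hc0.le h
      linarith
    · have hWI := WI_le_of_mem hz hv
      have hA := lemA hf hz hc0 hc1.le h.le
      have : WI f (f z + c*v) ≤ (c*ε)^2 := by nlinarith [WI_nonneg (f := f) (f z + v)]
      exact le_csSup hbdd2 (mem_S_of hz hcε.le this)
  have part1 : c * rhoM ε f (f z) ≤ rhoM (c*ε) f (f z) := by
    rw [hrho1, hrho2, mul_comm]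
    rw [← le_div_iff₀ hc0]
    apply csSup_le hne1
    intro v hv
    rw [le_div_iff₀ hc0, mul_comm]
    exact key1 v hv
  -- Part 2
  set k : ℝ := c ^ ((2:ℝ)/3) with hk
  have hk0 : 0 < k := Real.rpow_pos_of_pos hc0 _
  have hk1 : k < 1 := Real.rpow_lt_one hc0.le hc1 (by norm_num)
  have hk3 : k^3 = c^2 := by
    rw [hk, ← Real.rpow_natCast (c ^ ((2:ℝ)/3)) 3, ← Real.rpow_mul hc0.le,
      ← Real.rpow_natCast c 2]
    norm_num
  have hL : 1 ≤ k⁻¹ := (one_le_inv₀ hk0).2 hk1.le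
  have key2 : ∀ v ∈ S (c*ε), v ≤ k * sSup (S ε) := by
    intro v hv
    rcases le_or_gt v 0 with h | h
    · have : 0 < k * sSup (S ε) := by
        rw [← hrho1]; exact mul_pos hk0 hpos
      linarith
    · have hWI := WI_le_of_mem hz hv
      have hB := lemB hf hz hL h.le
      have hWI2 : WI f (f z + k⁻¹*v) ≤ ε^2 := by
        have h3 : (k⁻¹)^3 * (c*ε)^2 = ε^2 := by
          rw [inv_pow, hk3]
          first | (field_simp; ring) | field_simp
        calc WI f (f z + k⁻¹*v) ≤ (k⁻¹)^3 * WI f (f z + v) := hB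
          _ ≤ (k⁻¹)^3 * (c*ε)^2 := by
              apply mul_le_mul_of_nonneg_left hWI (by positivity)
          _ = ε^2 := h3
      have hmem : k⁻¹ * v ∈ S ε := mem_S_of hz hε.le hWI2
      have hle : k⁻¹ * v ≤ sSup (S ε) := le_csSup hfin hmem
      calc v = k * (k⁻¹ * v) := by field_simp
        _ ≤ k * sSup (S ε) := mul_le_mul_of_nonneg_left hle hk0.le
  have part2 : rhoM (c*ε) f (f z) ≤ k * rhoM ε f (f z) := by
    rw [hrho2, hrho1]
    exact csSup_le hne2 key2
  constructor
  · rw [le_div_iff₀ hpos]; linarith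
  · rw [div_le_iff₀ hpos]; linarith
end

section
/- For every convex f in F and ε > 0, the local modulus of continuity of the minimum is sandwiched by the water-filling depth: ρ_m(ε; f) ≤ ω_m(ε; f) ≤ 3 ρ_m(ε; f). -/
open MeasureTheory Set

lemma conv_upper {f : ℝ → ℝ} (hf : ConvexOn ℝ (Icc (0:ℝ) 1) f) {t : ℝ}
    (ht : t ∈ Icc (0:ℝ) 1) : f t ≤ max (f 0) (f 1) := by
  obtain ⟨h0, h1⟩ := ht
  have zm : (0:ℝ) ∈ Icc (0:ℝ) 1 := by norm_num
  have om : (1:ℝ) ∈ Icc (0:ℝ) 1 := by norm_num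
  have := hf.2 zm om (show (0:ℝ) ≤ 1 - t by linarith) h0 (by ring)
  simp only [smul_eq_mul, mul_zero, mul_one, zero_add] at this
  have h2 : (1 - t) * f 0 + t * f 1 ≤ max (f 0) (f 1) := by
    have := le_max_left (f 0) (f 1); have := le_max_right (f 0) (f 1)
    nlinarith
  linarith

lemma conv_lower {f : ℝ → ℝ} (hf : ConvexOn ℝ (Icc (0:ℝ) 1) f) {t : ℝ}
    (ht : t ∈ Icc (0:ℝ) 1) : 2 * f (1/2) - max (f 0) (f 1) ≤ f t := by
  obtain ⟨h0, h1⟩ := ht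
  have h2 : (1 - t) ∈ Icc (0:ℝ) 1 := ⟨by linarith, by linarith⟩
  have := hf.2 (Set.mem_Icc.2 ⟨h0, h1⟩) h2 (show (0:ℝ) ≤ 1/2 by norm_num) (show (0:ℝ) ≤ 1/2 by norm_num) (show (1:ℝ)/2 + 1/2 = 1 by norm_num)
  simp only [smul_eq_mul] at this
  have he : (1/2 : ℝ) * t + (1/2) * (1 - t) = 1/2 := by ring
  rw [he] at this
  have := conv_upper hf h2
  linarith

lemma conv_abs_bound {f : ℝ → ℝ} (hf : ConvexOn ℝ (Icc (0:ℝ) 1) f) :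
    ∃ C : ℝ, ∀ t ∈ Icc (0:ℝ) 1, |f t| ≤ C := by
  refine ⟨max |max (f 0) (f 1)| |2 * f (1/2) - max (f 0) (f 1)|, fun t ht => ?_⟩
  rw [abs_le]
  constructor
  · have := conv_lower hf ht
    have : -(|2 * f (1/2) - max (f 0) (f 1)|) ≤ f t := by
      have := neg_abs_le (2 * f (1/2) - max (f 0) (f 1)); linarith
    have h2 := le_max_right |max (f 0) (f 1)| |2 * f (1/2) - max (f 0) (f 1)|
    linarith
  · have h1 := conv_upper hf ht
    have h2 := le_abs_self (max (f 0) (f 1))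
    have h3 := le_max_left |max (f 0) (f 1)| |2 * f (1/2) - max (f 0) (f 1)|
    linarith

lemma conv_aemeas {f : ℝ → ℝ} (hf : ConvexOn ℝ (Icc (0:ℝ) 1) f) :
    AEMeasurable f (volume.restrict (Ioc (0:ℝ) 1)) := by
  rw [← MeasureTheory.Measure.restrict_congr_set Ioo_ae_eq_Ioc]
  have hc := hf.continuousOn_interior
  rw [interior_Icc] at hc
  exact hc.aemeasurable measurableSet_Ioo

lemma integrableOn_of_bounded {h : ℝ → ℝ}
    (hm : AEMeasurable h (volume.restrict (Ioc (0:ℝ) 1))) {C : ℝ}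
    (hb : ∀ t ∈ Ioc (0:ℝ) 1, |h t| ≤ C) : IntegrableOn h (Ioc (0:ℝ) 1) := by
  refine Integrable.mono' (g := fun _ => C) ?_ hm.aestronglyMeasurable ?_
  · exact integrableOn_const measure_Ioc_lt_top.ne
  · exact (ae_restrict_iff' measurableSet_Ioc).2 (Filter.Eventually.of_forall hb)

lemma sq_diff_integrable {f g : ℝ → ℝ} (hf : ConvexOn ℝ (Icc (0:ℝ) 1) f)
    (hg : ConvexOn ℝ (Icc (0:ℝ) 1) g) :
    IntegrableOn (fun t => (f t - g t)^2) (Ioc (0:ℝ) 1) := by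
  obtain ⟨C, hC⟩ := conv_abs_bound hf
  obtain ⟨D, hD⟩ := conv_abs_bound hg
  have hm : AEMeasurable (fun t => (f t - g t)^2) (volume.restrict (Ioc (0:ℝ) 1)) := by
    have := ((conv_aemeas hf).sub (conv_aemeas hg))
    exact this.pow aemeasurable_const
  refine integrableOn_of_bounded hm (C := (C + D)^2) fun t ht => ?_
  have ht' : t ∈ Icc (0:ℝ) 1 := Ioc_subset_Icc_self ht
  have h1 := hC t ht'; have h2 := hD t ht'
  have h3 : |f t - g t| ≤ C + D := (abs_sub (f t) (g t)).trans (by linarith)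
  have h4 : (f t - g t)^2 ≤ (C + D)^2 := by nlinarith [abs_nonneg (f t - g t), sq_abs (f t - g t)]
  calc |(f t - g t)^2| = (f t - g t)^2 := abs_of_nonneg (sq_nonneg _)
    _ ≤ (C + D)^2 := h4

lemma L2_eq (f g : ℝ → ℝ) :
    L2 f g = Real.sqrt (∫ t in Ioc (0:ℝ) 1, (f t - g t) ^ 2) := by
  rw [L2, intervalIntegral.integral_of_le zero_le_one]

lemma trunc_convex {f : ℝ → ℝ} (hf : ConvexOn ℝ (Icc (0:ℝ) 1) f) (u : ℝ) :
    ConvexOn ℝ (Icc (0:ℝ) 1) (trunc f u) :=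
  hf.sup (convexOn_const u (convex_Icc 0 1))

lemma vee_convex (c d z : ℝ) (hd : 0 ≤ d) :
    ConvexOn ℝ (Icc (0:ℝ) 1) (fun t => c + d * |t - z|) := by
  refine ⟨convex_Icc 0 1, fun x _ y _ a b ha hb hab => ?_⟩
  simp only [smul_eq_mul]
  have h1 : |a * x + b * y - z| ≤ a * |x - z| + b * |y - z| := by
    have : a * x + b * y - z = a * (x - z) + b * (y - z) := by
      have hz : z = (a + b) * z := by rw [hab]; ring
      calc a * x + b * y - z = a * x + b * y - (a + b) * z := by rw [← hz]
        _ = a * (x - z) + b * (y - z) := by ring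
    rw [this]
    calc |a * (x - z) + b * (y - z)| ≤ |a * (x - z)| + |b * (y - z)| := abs_add_le _ _
      _ = a * |x - z| + b * |y - z| := by rw [abs_mul, abs_mul, abs_of_nonneg ha, abs_of_nonneg hb]
  have h2 : d * |a * x + b * y - z| ≤ d * (a * |x - z| + b * |y - z|) :=
    mul_le_mul_of_nonneg_left h1 hd
  have hc : c = a * c + b * c := by rw [← add_mul, hab, one_mul]
  calc c + d * |a * x + b * y - z| ≤ c + d * (a * |x - z| + b * |y - z|) := by linarith
    _ = a * (c + d * |x - z|) + b * (c + d * |y - z|) := by rw [hc]; ring_nf; nlinarith [hab]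


lemma L2_mono {f A B : ℝ → ℝ} (hf : ConvexOn ℝ (Icc (0:ℝ) 1) f)
    (hA : ConvexOn ℝ (Icc (0:ℝ) 1) A) (hB : ConvexOn ℝ (Icc (0:ℝ) 1) B)
    (h : ∀ t ∈ Ioc (0:ℝ) 1, (f t - A t)^2 ≤ (f t - B t)^2) : L2 f A ≤ L2 f B := by
  rw [L2_eq, L2_eq]
  exact Real.sqrt_le_sqrt (setIntegral_mono_on (sq_diff_integrable hf hA)
    (sq_diff_integrable hf hB) measurableSet_Ioc h)

lemma L2_sq_le {f g : ℝ → ℝ} {ε : ℝ} (h : L2 f g ≤ ε) :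
    ∫ t in Ioc (0:ℝ) 1, (f t - g t)^2 ≤ ε ^ 2 := by
  rw [L2_eq] at h
  have hI : 0 ≤ ∫ t in Ioc (0:ℝ) 1, (f t - g t)^2 :=
    setIntegral_nonneg measurableSet_Ioc (fun t _ => sq_nonneg _)
  nlinarith [Real.sq_sqrt hI, Real.sqrt_nonneg (∫ t in Ioc (0:ℝ) 1, (f t - g t)^2)]

lemma sq_L2_le {f g : ℝ → ℝ} {ε : ℝ} (hε : 0 ≤ ε)
    (h : ∫ t in Ioc (0:ℝ) 1, (f t - g t)^2 ≤ ε ^ 2) : L2 f g ≤ ε := by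
  rw [L2_eq]
  calc Real.sqrt (∫ t in Ioc (0:ℝ) 1, (f t - g t)^2) ≤ Real.sqrt (ε^2) :=
        Real.sqrt_le_sqrt h
    _ = ε := by rw [Real.sqrt_sq hε]

lemma min_le {f : ℝ → ℝ} {z : ℝ} (hz : UniqueMinOn f z) {t : ℝ}
    (ht : t ∈ Icc (0:ℝ) 1) : f z ≤ f t := by
  by_cases h : t = z
  · rw [h]
  · exact (hz.2 t ht h).le

set_option maxHeartbeats 1600000 in
lemma key2 {f g : ℝ → ℝ} {z zg ε : ℝ}
    (hf : ConvexOn ℝ (Icc (0:ℝ) 1) f) (hz : UniqueMinOn f z)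
    (hg : ConvexOn ℝ (Icc (0:ℝ) 1) g) (hzg : UniqueMinOn g zg)
    (hlt : g zg < f z) (hL2 : L2 f g ≤ ε) (hε : 0 ≤ ε) :
    L2 f (trunc f (f z + (f z - g zg)/3)) ≤ ε := by
  set r : ℝ := (f z - g zg)/3 with hr_def
  have hr : 0 < r := by simp only [hr_def]; linarith
  have hgzg : g zg = f z - 3*r := by simp only [hr_def]; ring
  set u : ℝ := f z + r with hu_def
  set J : Set ℝ := {t ∈ Icc (0:ℝ) 1 | g t ≤ f z - 2*r} with hJ_def
  have hzgJ : zg ∈ J := ⟨hzg.1, by rw [hgzg]; linarith⟩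
  have hJne : J.Nonempty := ⟨zg, hzgJ⟩
  have hJbddA : BddAbove J := ⟨1, fun t ht => ht.1.2⟩
  have hJbddB : BddBelow J := ⟨0, fun t ht => ht.1.1⟩
  set a' : ℝ := sInf J with ha_def
  set b' : ℝ := sSup J with hb_def
  have ha'zg : a' ≤ zg := csInf_le hJbddB hzgJ
  have hzgb' : zg ≤ b' := le_csSup hJbddA hzgJ
  have ha'0 : (0:ℝ) ≤ a' := le_csInf hJne (fun t ht => ht.1.1)
  have hb'1 : b' ≤ 1 := csSup_le hJne (fun t ht => ht.1.2)
  have hJconv : Convex ℝ J := hg.convex_le (f z - 2*r)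
  have hIooJ : Ioo a' b' ⊆ J := by
    intro t ht
    obtain ⟨x, hx, hxt⟩ := exists_lt_of_csInf_lt hJne ht.1
    obtain ⟨y, hy, hty⟩ := exists_lt_of_lt_csSup hJne ht.2
    exact hJconv.ordConnected.out hx hy ⟨hxt.le, hty.le⟩
  -- cover lemma for the middle region
  have hcover : ∀ t ∈ Icc (0:ℝ) 1, f z - 2*r < g t → g t < u →
      (t ∈ Icc (zg - 4*(zg - a')) a' ∨ t ∈ Icc b' (zg + 4*(b' - zg))) := by
    intro t ht h1 h2
    have hsJ : ((3:ℝ)/4) * zg + (1/4) * t ∈ J := by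
      constructor
      · constructor
        · nlinarith [hzg.1.1, ht.1]
        · nlinarith [hzg.1.2, ht.2]
      · have := hg.2 hzg.1 ht (show (0:ℝ) ≤ 3/4 by norm_num)
          (show (0:ℝ) ≤ 1/4 by norm_num) (show (3:ℝ)/4 + 1/4 = 1 by norm_num)
        simp only [smul_eq_mul] at this
        have h3 : (3:ℝ)/4 * g zg + 1/4 * g t ≤ f z - 2*r := by
          rw [hgzg]; simp only [hu_def] at h2; nlinarith
        linarith
    rcases lt_trichotomy t zg with hto | hto | hto
    · left
      have hsa : a' ≤ (3:ℝ)/4 * zg + (1/4) * t := csInf_le hJbddB hsJ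
      constructor
      · linarith
      · by_contra hcon
        push_neg at hcon
        have : t ∈ J := hIooJ ⟨hcon, by linarith⟩
        linarith [this.2]
    · exfalso; rw [hto, hgzg] at h1; linarith
    · right
      have hsb : (3:ℝ)/4 * zg + (1/4) * t ≤ b' := le_csSup hJbddA hsJ
      constructor
      · by_contra hcon
        push_neg at hcon
        have : t ∈ J := hIooJ ⟨by linarith, hcon⟩
        linarith [this.2]
      · linarith
  -- pointwise inequality on (0,1]
  set cL : Set ℝ := Icc (zg - 4*(zg - a')) a' with hcL_def
  set cR : Set ℝ := Icc b' (zg + 4*(b' - zg)) with hcR_def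
  have hpt : ∀ t ∈ Ioc (0:ℝ) 1,
      (Ioo a' b').indicator (fun _ => 3*r^2) t - cL.indicator (fun _ => r^2) t
        - cR.indicator (fun _ => r^2) t
      ≤ (f t - g t)^2 - (f t - trunc f u t)^2 := by
    intro t ht
    have ht' : t ∈ Icc (0:ℝ) 1 := Ioc_subset_Icc_self ht
    have hx : f z ≤ f t := min_le hz ht'
    simp only [trunc]
    have hφle : (f t - max (f t) u)^2 ≤ r^2 := by
      rcases le_total u (f t) with h | h
      · rw [max_eq_left h]; simp; positivity
      · rw [max_eq_right h]
        have h2 : u - f t ≤ r := by simp only [hu_def]; linarith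
        nlinarith
    have hind : ∀ (S : Set ℝ) (c : ℝ), 0 ≤ c →
        0 ≤ S.indicator (fun _ => c) t ∧ S.indicator (fun _ => c) t ≤ c := by
      intro S c hc
      classical
      rw [Set.indicator_apply]; split <;> simp [hc]
    rcases le_or_gt (g t) (f z - 2*r) with hJt | h1
    · have hψ : (f t - f z + 2*r)^2 ≤ (f t - g t)^2 := by nlinarith
      have hbig : 3*r^2 ≤ (f t - g t)^2 - (f t - max (f t) u)^2 := by
        rcases le_total u (f t) with h | h
        · rw [max_eq_left h]
          simp only [hu_def] at h
          nlinarith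
        · rw [max_eq_right h]
          simp only [hu_def] at h ⊢
          nlinarith
      have i1 := (hind (Ioo a' b') (3*r^2) (by positivity)).2
      have i2 := (hind cL (r^2) (sq_nonneg r)).1
      have i3 := (hind cR (r^2) (sq_nonneg r)).1
      linarith
    · have htIoo : t ∉ Ioo a' b' := fun hcon => absurd (hIooJ hcon).2 (by linarith)
      have hIoo0 : (Ioo a' b').indicator (fun _ => 3*r^2) t = 0 :=
        Set.indicator_of_notMem htIoo _
      rcases lt_or_ge (g t) u with h2 | h2
      · rcases hcover t ht' h1 h2 with hm | hm
        · have he : cL.indicator (fun _ => r^2) t = r^2 := Set.indicator_of_mem hm _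
          have i3 := (hind cR (r^2) (sq_nonneg r)).1
          rw [hIoo0, he]
          linarith [sq_nonneg (f t - g t), hφle, i3]
        · have he : cR.indicator (fun _ => r^2) t = r^2 := Set.indicator_of_mem hm _
          have i2 := (hind cL (r^2) (sq_nonneg r)).1
          rw [hIoo0, he]
          linarith [sq_nonneg (f t - g t), hφle, i2]
      · have hψφ : (f t - max (f t) u)^2 ≤ (f t - g t)^2 := by
          rcases le_total u (f t) with h | h
          · rw [max_eq_left h]; simp; positivity
          · rw [max_eq_right h]; nlinarith
        have i2 := (hind cL (r^2) (sq_nonneg r)).1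
        have i3 := (hind cR (r^2) (sq_nonneg r)).1
        rw [hIoo0]
        linarith [hψφ, i2, i3]
  -- integrability
  have hIψ : IntegrableOn (fun t => (f t - g t)^2) (Ioc (0:ℝ) 1) := sq_diff_integrable hf hg
  have hIφ : IntegrableOn (fun t => (f t - trunc f u t)^2) (Ioc (0:ℝ) 1) :=
    sq_diff_integrable hf (trunc_convex hf u)
  have hconst : IntegrableOn (fun _ : ℝ => (1:ℝ)) (Ioc (0:ℝ) 1) :=
    integrableOn_const measure_Ioc_lt_top.ne
  have hI1 : IntegrableOn ((Ioo a' b').indicator (fun _ => 3*r^2)) (Ioc (0:ℝ) 1) :=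
    (integrableOn_const measure_Ioc_lt_top.ne).indicator measurableSet_Ioo
  have hI2 : IntegrableOn (cL.indicator (fun _ => r^2)) (Ioc (0:ℝ) 1) :=
    (integrableOn_const measure_Ioc_lt_top.ne).indicator measurableSet_Icc
  have hI3 : IntegrableOn (cR.indicator (fun _ => r^2)) (Ioc (0:ℝ) 1) :=
    (integrableOn_const measure_Ioc_lt_top.ne).indicator measurableSet_Icc
  have hmono : ∫ t in Ioc (0:ℝ) 1, ((Ioo a' b').indicator (fun _ => 3*r^2) t
        - cL.indicator (fun _ => r^2) t - cR.indicator (fun _ => r^2) t)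
      ≤ ∫ t in Ioc (0:ℝ) 1, ((f t - g t)^2 - (f t - trunc f u t)^2) :=
    setIntegral_mono_on ((hI1.sub hI2).sub hI3) (hIψ.sub hIφ) measurableSet_Ioc hpt
  -- compute the left integral
  have hv1 : ∫ t in Ioc (0:ℝ) 1, (Ioo a' b').indicator (fun _ => 3*r^2) t
      = (b' - a') * (3*r^2) := by
    rw [setIntegral_indicator measurableSet_Ioo]
    have hsub : Ioo a' b' ⊆ Ioc (0:ℝ) 1 :=
      fun t ht => ⟨lt_of_le_of_lt ha'0 ht.1, le_trans ht.2.le hb'1⟩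
    rw [Set.inter_eq_self_of_subset_right hsub, setIntegral_const, measureReal_def, Real.volume_Ioo,
      ENNReal.toReal_ofReal (by linarith : (0:ℝ) ≤ b' - a'), smul_eq_mul]
  have hv2 : ∫ t in Ioc (0:ℝ) 1, cL.indicator (fun _ => r^2) t ≤ 3*(zg - a') * r^2 := by
    rw [setIntegral_indicator measurableSet_Icc, setIntegral_const, measureReal_def, smul_eq_mul]
    have hle : (volume (Ioc (0:ℝ) 1 ∩ cL)).toReal ≤ 3*(zg - a') := by
      have h1 : volume (Ioc (0:ℝ) 1 ∩ cL) ≤ volume cL := measure_mono inter_subset_right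
      have h2 : (volume cL).toReal = 3*(zg - a') := by
        rw [hcL_def, Real.volume_Icc, ENNReal.toReal_ofReal (by linarith)]
        ring
      rw [← h2]
      exact ENNReal.toReal_mono (by rw [hcL_def, Real.volume_Icc]; exact ENNReal.ofReal_ne_top) h1
    nlinarith [sq_nonneg r, ENNReal.toReal_nonneg (a := volume (Ioc (0:ℝ) 1 ∩ cL))]
  have hv3 : ∫ t in Ioc (0:ℝ) 1, cR.indicator (fun _ => r^2) t ≤ 3*(b' - zg) * r^2 := by
    rw [setIntegral_indicator measurableSet_Icc, setIntegral_const, measureReal_def, smul_eq_mul]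
    have hle : (volume (Ioc (0:ℝ) 1 ∩ cR)).toReal ≤ 3*(b' - zg) := by
      have h1 : volume (Ioc (0:ℝ) 1 ∩ cR) ≤ volume cR := measure_mono inter_subset_right
      have h2 : (volume cR).toReal = 3*(b' - zg) := by
        rw [hcR_def, Real.volume_Icc, ENNReal.toReal_ofReal (by linarith)]
        ring
      rw [← h2]
      exact ENNReal.toReal_mono (by rw [hcR_def, Real.volume_Icc]; exact ENNReal.ofReal_ne_top) h1
    nlinarith [sq_nonneg r, ENNReal.toReal_nonneg (a := volume (Ioc (0:ℝ) 1 ∩ cR))]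
  have hsplit : ∫ t in Ioc (0:ℝ) 1, ((Ioo a' b').indicator (fun _ => 3*r^2) t
        - cL.indicator (fun _ => r^2) t - cR.indicator (fun _ => r^2) t)
      = (∫ t in Ioc (0:ℝ) 1, (Ioo a' b').indicator (fun _ => 3*r^2) t)
        - (∫ t in Ioc (0:ℝ) 1, cL.indicator (fun _ => r^2) t)
        - (∫ t in Ioc (0:ℝ) 1, cR.indicator (fun _ => r^2) t) := by
    have hI12 : IntegrableOn (fun t => (Ioo a' b').indicator (fun _ => 3*r^2) t
        - cL.indicator (fun _ => r^2) t) (Ioc (0:ℝ) 1) := hI1.sub hI2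
    rw [integral_sub hI12 hI3, integral_sub hI1 hI2]
  have hsplit2 : ∫ t in Ioc (0:ℝ) 1, ((f t - g t)^2 - (f t - trunc f u t)^2)
      = (∫ t in Ioc (0:ℝ) 1, (f t - g t)^2) - ∫ t in Ioc (0:ℝ) 1, (f t - trunc f u t)^2 :=
    integral_sub hIψ hIφ
  have hL : 0 ≤ (∫ t in Ioc (0:ℝ) 1, (f t - g t)^2) - ∫ t in Ioc (0:ℝ) 1, (f t - trunc f u t)^2 := by
    rw [← hsplit2]
    refine le_trans ?_ hmono
    rw [hsplit, hv1]
    nlinarith [sq_nonneg r]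
  have hfin := L2_sq_le hL2
  apply sq_L2_le hε
  linarith

lemma key1 {f g : ℝ → ℝ} {z zg ε : ℝ}
    (hf : ConvexOn ℝ (Icc (0:ℝ) 1) f) (hz : UniqueMinOn f z)
    (hg : ConvexOn ℝ (Icc (0:ℝ) 1) g) (hzg : UniqueMinOn g zg)
    (hL2 : L2 f g ≤ ε) : L2 f (trunc f (g zg)) ≤ ε := by
  refine le_trans (L2_mono hf (trunc_convex hf (g zg)) hg fun t ht => ?_) hL2
  have ht' : t ∈ Icc (0:ℝ) 1 := Ioc_subset_Icc_self ht
  simp only [trunc]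
  rcases le_total (g zg) (f t) with h | h
  · rw [max_eq_left h]; simp; positivity
  · rw [max_eq_right h]
    have : g zg ≤ g t := min_le hzg ht'
    nlinarith

lemma L2_self_zero (f : ℝ → ℝ) : L2 f f = 0 := by
  simp [L2]

lemma zero_mem_S_s4 {f : ℝ → ℝ} {z ε : ℝ} (hz : UniqueMinOn f z) (hε : 0 ≤ ε) :
    L2 f (trunc f (f z)) ≤ ε := by
  rw [L2_eq]
  have h0 : ∫ t in Ioc (0:ℝ) 1, (f t - trunc f (f z) t)^2 = 0 := by
    rw [setIntegral_congr_fun measurableSet_Ioc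
      (g := fun _ => (0:ℝ)) (fun t ht => by
        simp only [trunc, max_eq_left (min_le hz (Ioc_subset_Icc_self ht))]
        ring)]
    simp
  rw [h0, Real.sqrt_zero]
  exact hε

lemma S_bddAbove {f : ℝ → ℝ} {z ε : ℝ} (hf : ConvexOn ℝ (Icc (0:ℝ) 1) f)
    (hε : 0 ≤ ε) :
    BddAbove {v | ∃ u, v = u - f z ∧ L2 f (trunc f u) ≤ ε} := by
  refine ⟨max (f 0) (f 1) + ε - f z, fun v hv => ?_⟩
  obtain ⟨u, rfl, hLu⟩ := hv
  set Bu : ℝ := max (f 0) (f 1) with hBu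
  rcases le_or_gt u Bu with h | h
  · linarith
  · have hpt : ∀ t ∈ Ioc (0:ℝ) 1, (u - Bu)^2 ≤ (f t - trunc f u t)^2 := by
      intro t ht
      have hub := conv_upper hf (Ioc_subset_Icc_self ht)
      simp only [trunc, max_eq_right (show f t ≤ u by linarith)]
      nlinarith
    have hint := setIntegral_mono_on
      (integrableOn_const measure_Ioc_lt_top.ne)
      (sq_diff_integrable hf (trunc_convex hf u)) measurableSet_Ioc hpt
    rw [setIntegral_const, measureReal_def, Real.volume_Ioc, smul_eq_mul] at hint
    norm_num at hint
    have h2 := L2_sq_le hLu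
    nlinarith

lemma constructB {f : ℝ → ℝ} {z u δ ε : ℝ} (hf : ConvexOn ℝ (Icc (0:ℝ) 1) f)
    (hz : UniqueMinOn f z) (hu : L2 f (trunc f u) ≤ ε) (hδ : 0 < δ)
    (hδu : δ < u - f z) :
    ∃ g zg, ConvexOn ℝ (Icc (0:ℝ) 1) g ∧ UniqueMinOn g zg ∧ L2 f g ≤ ε ∧
      |f z - g zg| = u - δ - f z := by
  set g : ℝ → ℝ := fun t => max (f t) (u - δ + δ * |t - z|) with hg_def
  have hV : ConvexOn ℝ (Icc (0:ℝ) 1) (fun t => (u - δ) + δ * |t - z|) :=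
    vee_convex (u - δ) δ z hδ.le
  have hgconv : ConvexOn ℝ (Icc (0:ℝ) 1) g := hf.sup hV
  have hgz : g z = u - δ := by
    simp only [hg_def, sub_self, abs_zero, mul_zero, add_zero]
    exact max_eq_right (by linarith)
  refine ⟨g, z, hgconv, ⟨hz.1, fun t ht htne => ?_⟩, ?_, ?_⟩
  · rw [hgz]
    have h1 : 0 < |t - z| := abs_pos.2 (sub_ne_zero.2 htne)
    have h2 : u - δ + δ * |t - z| ≤ g t := le_max_right _ _
    nlinarith
  · refine le_trans (L2_mono hf hgconv (trunc_convex hf u) fun t ht => ?_) hu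
    have ht' : t ∈ Icc (0:ℝ) 1 := Ioc_subset_Icc_self ht
    have habs : |t - z| ≤ 1 := by
      rw [abs_le]
      constructor <;> [linarith [ht'.1, hz.1.2]; linarith [ht'.2, hz.1.1]]
    have h1 : f t ≤ g t := le_max_left _ _
    have h2 : g t ≤ trunc f u t := by
      simp only [hg_def, trunc]
      exact max_le_max (le_refl _) (by nlinarith)
    have h3 : f t ≤ trunc f u t := le_max_left _ _
    nlinarith
  · rw [hgz, abs_of_nonpos (by linarith)]
    ring

/-- Proposition 2.2 for the minimum: ρ_m(ε;f) ≤ ω_m(ε;f) ≤ 3ρ_m(ε;f). -/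
theorem stmt4 (f : ℝ → ℝ) (z ε : ℝ)
    (hf : ConvexOn ℝ (Icc (0:ℝ) 1) f) (hz : UniqueMinOn f z) (hε : 0 < ε) :
    rhoM ε f (f z) ≤ omegaM ε f (f z) ∧ omegaM ε f (f z) ≤ 3 * rhoM ε f (f z) := by
  set S : Set ℝ := {v | ∃ u, v = u - f z ∧ L2 f (trunc f u) ≤ ε} with hS_def
  set B : Set ℝ := {v | ∃ g zg, ConvexOn ℝ (Icc (0:ℝ) 1) g ∧ UniqueMinOn g zg ∧
    L2 f g ≤ ε ∧ v = |f z - g zg|} with hB_def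
  have hSne : (0:ℝ) ∈ S := ⟨f z, by ring, zero_mem_S_s4 hz hε.le⟩
  have hSbdd : BddAbove S := S_bddAbove hf hε.le
  have hρ0 : 0 ≤ rhoM ε f (f z) := le_csSup hSbdd hSne
  have hBsub : ∀ v ∈ B, v ≤ 3 * rhoM ε f (f z) := by
    rintro v ⟨g, zg, hgc, hgm, hgL, rfl⟩
    rcases le_or_gt (f z) (g zg) with h | h
    · have hmem : g zg - f z ∈ S := ⟨g zg, rfl, key1 hf hz hgc hgm hgL⟩
      have := le_csSup hSbdd hmem
      rw [abs_of_nonpos (by linarith)]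
      unfold rhoM
      rw [hS_def] at this
      linarith
    · have hmem : (f z - g zg)/3 ∈ S :=
        ⟨f z + (f z - g zg)/3, by ring, key2 hf hz hgc hgm h hgL hε.le⟩
      have := le_csSup hSbdd hmem
      rw [abs_of_nonneg (by linarith)]
      unfold rhoM
      rw [hS_def] at this
      linarith
  have hB0 : (0:ℝ) ∈ B := ⟨f, z, hf, hz, by rw [L2_self_zero]; exact hε.le, by simp⟩
  have hBbdd : BddAbove B := ⟨3 * rhoM ε f (f z), hBsub⟩
  have hω0 : 0 ≤ omegaM ε f (f z) := le_csSup hBbdd hB0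
  constructor
  · apply Real.sSup_le _ hω0
    rintro v ⟨u, rfl, hLu⟩
    rcases le_or_gt u (f z) with h | h
    · linarith
    · by_contra hcon
      push_neg at hcon
      set ω := omegaM ε f (f z) with hω_def
      set δ : ℝ := min ((u - f z - ω)/2) ((u - f z)/2) with hδ_def
      have hδpos : 0 < δ := lt_min (by linarith) (by linarith)
      have hδlt : δ < u - f z := lt_of_le_of_lt (min_le_right _ _) (by linarith)
      obtain ⟨g, zg, hgc, hgm, hgL, hgeq⟩ := constructB hf hz hLu hδpos hδlt
      have hmem : u - δ - f z ∈ B := ⟨g, zg, hgc, hgm, hgL, hgeq.symm⟩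
      have hle : u - δ - f z ≤ ω := le_csSup hBbdd hmem
      have : δ ≤ (u - f z - ω)/2 := min_le_left _ _
      linarith
  · exact Real.sSup_le hBsub (by linarith)
end

section
/- For any convex function f in F and any r > 0, there exists a convex function g in F with ‖f − g‖_2 = r such that |Z(g) − Z(f)| · |M(g) − M(f)|^2 ≥ r^2 / 2. -/
open MeasureTheory Set

lemma em_min_le {f : ℝ → ℝ} {z : ℝ} (hz : UniqueMinOn f z) :
    ∀ t ∈ Icc (0:ℝ) 1, f z ≤ f t := by
  intro t ht
  rcases eq_or_ne t z with h | h
  · rw [h]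
  · exact (hz.2 t ht h).le

lemma em_mono_right {f : ℝ → ℝ} {z : ℝ} (hf : ConvexOn ℝ (Icc (0:ℝ) 1) f)
    (hz : UniqueMinOn f z) {t₁ t₂ : ℝ} (h1 : z ≤ t₁) (h2 : t₁ < t₂) (h3 : t₂ ≤ 1) :
    f t₁ < f t₂ := by
  obtain ⟨hz0, hz1⟩ := hz.1
  have ht₂ : t₂ ∈ Icc (0:ℝ) 1 := ⟨by linarith, h3⟩
  rcases eq_or_lt_of_le h1 with h | h
  · rw [← h]
    exact hz.2 t₂ ht₂ (by intro he; linarith)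
  · have ht₁ : t₁ ∈ Icc (0:ℝ) 1 := ⟨by linarith, by linarith⟩
    have hden : (0:ℝ) < t₂ - z := by linarith
    have hne : t₂ - z ≠ 0 := ne_of_gt hden
    set a : ℝ := (t₂ - t₁)/(t₂ - z) with ha
    set b : ℝ := (t₁ - z)/(t₂ - z) with hb
    have ha0 : 0 < a := div_pos (by linarith) hden
    have hb0 : 0 < b := div_pos (by linarith) hden
    have hab : a + b = 1 := by rw [ha, hb]; field_simp; ring
    have hcomb : a • z + b • t₂ = t₁ := by
      simp only [smul_eq_mul, ha, hb]; field_simp; ring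
    have hconv := hf.2 hz.1 ht₂ ha0.le hb0.le hab
    rw [hcomb] at hconv
    simp only [smul_eq_mul] at hconv
    have hlt : f z < f t₁ := hz.2 t₁ ht₁ (by intro he; rw [he] at h; linarith)
    by_contra hcon
    push_neg at hcon
    have h5 : b * f t₂ ≤ b * f t₁ := mul_le_mul_of_nonneg_left hcon hb0.le
    have hid : a * f t₁ + b * f t₁ = f t₁ := by rw [← add_mul, hab, one_mul]
    have h6 : a * f t₁ ≤ a * f z := by linarith
    have h7 : f t₁ ≤ f z := le_of_mul_le_mul_left h6 ha0
    linarith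

lemma em_mono_left {f : ℝ → ℝ} {z : ℝ} (hf : ConvexOn ℝ (Icc (0:ℝ) 1) f)
    (hz : UniqueMinOn f z) {t₁ t₂ : ℝ} (h1 : 0 ≤ t₂) (h2 : t₂ < t₁) (h3 : t₁ ≤ z) :
    f t₁ < f t₂ := by
  obtain ⟨hz0, hz1⟩ := hz.1
  have ht₂ : t₂ ∈ Icc (0:ℝ) 1 := ⟨h1, by linarith⟩
  rcases eq_or_lt_of_le h3 with h | h
  · rw [h]
    exact hz.2 t₂ ht₂ (by intro he; linarith)
  · have ht₁ : t₁ ∈ Icc (0:ℝ) 1 := ⟨by linarith, by linarith⟩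
    have hden : (0:ℝ) < z - t₂ := by linarith
    have hne : z - t₂ ≠ 0 := ne_of_gt hden
    set a : ℝ := (t₁ - t₂)/(z - t₂) with ha
    set b : ℝ := (z - t₁)/(z - t₂) with hb
    have ha0 : 0 < a := div_pos (by linarith) hden
    have hb0 : 0 < b := div_pos (by linarith) hden
    have hab : a + b = 1 := by rw [ha, hb]; field_simp; ring
    have hcomb : a • z + b • t₂ = t₁ := by
      simp only [smul_eq_mul, ha, hb]; field_simp; ring
    have hconv := hf.2 hz.1 ht₂ ha0.le hb0.le hab
    rw [hcomb] at hconv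
    simp only [smul_eq_mul] at hconv
    have hlt : f z < f t₁ := hz.2 t₁ ht₁ (by intro he; rw [he] at h; linarith)
    by_contra hcon
    push_neg at hcon
    have h5 : b * f t₂ ≤ b * f t₁ := mul_le_mul_of_nonneg_left hcon hb0.le
    have hid : a * f t₁ + b * f t₁ = f t₁ := by rw [← add_mul, hab, one_mul]
    have h6 : a * f t₁ ≤ a * f z := by linarith
    have h7 : f t₁ ≤ f z := le_of_mul_le_mul_left h6 ha0
    linarith

lemma em_upper {f : ℝ → ℝ} (hf : ConvexOn ℝ (Icc (0:ℝ) 1) f) :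
    ∀ t ∈ Icc (0:ℝ) 1, f t ≤ max (f 0) (f 1) := by
  rintro t ⟨h0, h1⟩
  have h0m : (0:ℝ) ∈ Icc (0:ℝ) 1 := ⟨le_refl _, zero_le_one⟩
  have h1m : (1:ℝ) ∈ Icc (0:ℝ) 1 := ⟨zero_le_one, le_refl _⟩
  have hconv := hf.2 h0m h1m (by linarith : (0:ℝ) ≤ 1 - t) h0 (by ring)
  have he : ((1-t):ℝ) • (0:ℝ) + t • (1:ℝ) = t := by simp
  rw [he] at hconv
  simp only [smul_eq_mul] at hconv
  have hM0 : f 0 ≤ max (f 0) (f 1) := le_max_left _ _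
  have hM1 : f 1 ≤ max (f 0) (f 1) := le_max_right _ _
  nlinarith [mul_le_mul_of_nonneg_left hM0 (show (0:ℝ) ≤ 1 - t by linarith),
    mul_le_mul_of_nonneg_left hM1 h0]

noncomputable def emCost (f : ℝ → ℝ) (A e w : ℝ) : ℝ :=
  ∫ t in (0:ℝ)..1, (max (A + e * |t - w| - f t) 0)^2

lemma em_sq_max_le {X Y K D : ℝ} (hXY : X ≤ Y) (hD : Y - X ≤ D) (hK : Y ≤ K) (hD0 : 0 ≤ D) :
    (max Y 0)^2 ≤ (max X 0)^2 + D * (2 * max K 0) := by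
  rcases le_or_gt Y 0 with h | h
  · rw [max_eq_right h]
    have h1 : (0:ℝ) ≤ (max X 0)^2 := by positivity
    have h2 : (0:ℝ) ≤ max K 0 := le_max_right _ _
    nlinarith
  · have hy : max Y 0 = Y := max_eq_left h.le
    have hx0 : 0 ≤ max X 0 := le_max_right _ _
    have hxY : max X 0 ≤ Y := max_le hXY h.le
    have hxX : X ≤ max X 0 := le_max_left _ _
    have hKy : Y ≤ max K 0 := le_trans hK (le_max_left _ _)
    have key : (Y - max X 0) * (Y + max X 0) ≤ D * (2 * max K 0) := by
      apply mul_le_mul (by linarith) (by linarith) (by linarith) hD0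
    rw [hy]
    nlinarith [key]

lemma em_integrable {f : ℝ → ℝ} {z : ℝ} (hf : ConvexOn ℝ (Icc (0:ℝ) 1) f)
    (hz : UniqueMinOn f z)
    (A e w : ℝ) {c d : ℝ} (hc : 0 ≤ c) (hcd : c ≤ d) (hd : d ≤ 1) :
    IntervalIntegrable (fun t => (max (A + e * |t - w| - f t) 0)^2) volume c d := by
  rw [intervalIntegrable_iff, uIoc_of_le hcd]
  have hcont : ContinuousOn f (Ioo (0:ℝ) 1) := by
    have := hf.continuousOn_interior; rwa [interior_Icc] at this
  have hsub : Ioo c d ⊆ Ioo (0:ℝ) 1 := Ioo_subset_Ioo hc hd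
  have hrestr : (volume : Measure ℝ).restrict (Ioo c d) = volume.restrict (Ioc c d) :=
    Measure.restrict_congr_set Ioo_ae_eq_Ioc
  have hfm : AEMeasurable f (volume.restrict (Ioc c d)) := by
    rw [← hrestr]
    exact (hcont.mono hsub).aemeasurable measurableSet_Ioo
  have hgm : AEMeasurable (fun t => (max (A + e * |t - w| - f t) 0)^2)
      (volume.restrict (Ioc c d)) := by
    have hc1 : Continuous (fun t : ℝ => A + e * |t - w|) := by fun_prop
    exact (((hc1.aemeasurable).sub hfm).max aemeasurable_const).pow_const 2
  set B : ℝ := max (f 0) (f 1) with hB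
  set M : ℝ := |A| + |e| * (|w| + 1) + |f z| + |B| with hM
  refine Integrable.mono' (g := fun _ => M^2)
    (integrableOn_const measure_Ioc_lt_top.ne) hgm.aestronglyMeasurable ?_
  filter_upwards [ae_restrict_mem measurableSet_Ioc] with t ht
  have ht' : t ∈ Icc (0:ℝ) 1 := ⟨by linarith [ht.1], le_trans ht.2 hd⟩
  have habs : |t - w| ≤ |w| + 1 := by
    have h1 : |t| ≤ 1 := abs_le.mpr ⟨by linarith [ht'.1], ht'.2⟩
    calc |t - w| ≤ |t| + |w| := abs_sub t w
      _ ≤ |w| + 1 := by linarith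
  have hXle : A + e * |t - w| - f t ≤ M := by
    have h2 : e * |t - w| ≤ |e| * (|w| + 1) := by
      have ha : e * |t - w| ≤ |e| * |t - w| :=
        mul_le_mul_of_nonneg_right (le_abs_self e) (abs_nonneg _)
      have hb : |e| * |t - w| ≤ |e| * (|w| + 1) :=
        mul_le_mul_of_nonneg_left habs (abs_nonneg e)
      linarith
    have h3 : f z ≤ f t := em_min_le hz t ht'
    have h4 : -f t ≤ |f z| := by
      have := neg_le_abs (f z); linarith
    have h5 : A ≤ |A| := le_abs_self _
    have h6 : (0:ℝ) ≤ |B| := abs_nonneg _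
    rw [hM]; linarith
  have hM0 : (0:ℝ) ≤ M := by rw [hM]; positivity
  have hmax : max (A + e * |t - w| - f t) 0 ≤ M := max_le hXle hM0
  have hmax0 : (0:ℝ) ≤ max (A + e * |t - w| - f t) 0 := le_max_right _ _
  have : ‖(max (A + e * |t - w| - f t) 0)^2‖ = (max (A + e * |t - w| - f t) 0)^2 := by
    rw [Real.norm_eq_abs, abs_of_nonneg (by positivity)]
  rw [this]
  exact pow_le_pow_left₀ hmax0 hmax 2

lemma em_cost_nonneg (f : ℝ → ℝ) (A e w : ℝ) : 0 ≤ emCost f A e w := by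
  apply intervalIntegral.integral_nonneg zero_le_one
  intro t _
  positivity

lemma em_cost_mono {f : ℝ → ℝ} {z : ℝ} (hf : ConvexOn ℝ (Icc (0:ℝ) 1) f)
    (hz : UniqueMinOn f z) {A A' e e' : ℝ} (w : ℝ) (hA : A ≤ A') (he : e ≤ e') :
    emCost f A e w ≤ emCost f A' e' w := by
  apply intervalIntegral.integral_mono_on zero_le_one
    (em_integrable hf hz A e w le_rfl zero_le_one le_rfl)
    (em_integrable hf hz A' e' w le_rfl zero_le_one le_rfl)
  intro t _
  have h1 : A + e * |t - w| - f t ≤ A' + e' * |t - w| - f t := by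
    have := mul_le_mul_of_nonneg_right he (abs_nonneg (t - w)); linarith
  have h2 : max (A + e * |t - w| - f t) 0 ≤ max (A' + e' * |t - w| - f t) 0 :=
    max_le_max h1 le_rfl
  exact pow_le_pow_left₀ (le_max_right _ _) h2 2

lemma em_cost_zero_slope (f : ℝ → ℝ) (A w : ℝ) : emCost f A 0 w = emCost f A 0 0 := by
  apply intervalIntegral.integral_congr
  intro t _
  simp

lemma em_cost_le_sq {f : ℝ → ℝ} {z : ℝ} (hf : ConvexOn ℝ (Icc (0:ℝ) 1) f)
    (hz : UniqueMinOn f z) (A w : ℝ) :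
    emCost f A 0 w ≤ (max (A - f z) 0)^2 := by
  have h := intervalIntegral.integral_mono_on (μ := volume) zero_le_one
    (em_integrable hf hz A 0 w le_rfl zero_le_one le_rfl)
    (intervalIntegrable_const (c := (max (A - f z) 0)^2)) ?_
  · calc emCost f A 0 w ≤ ∫ _ in (0:ℝ)..1, (max (A - f z) 0)^2 := h
      _ = (max (A - f z) 0)^2 := by simp
  · intro t ht
    have h3 : f z ≤ f t := em_min_le hz t ht
    have h1 : max (A + 0 * |t - w| - f t) 0 ≤ max (A - f z) 0 :=
      max_le_max (by linarith) le_rfl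
    exact pow_le_pow_left₀ (le_max_right _ _) h1 2

lemma em_cost_lip {f : ℝ → ℝ} {z : ℝ} (hf : ConvexOn ℝ (Icc (0:ℝ) 1) f)
    (hz : UniqueMinOn f z) {A A' e e' w : ℝ} (hA : A ≤ A') (he0 : 0 ≤ e) (hee : e ≤ e')
    (hw : w ∈ Icc (0:ℝ) 1) :
    emCost f A' e' w ≤ emCost f A e w
      + ((A' - A) + (e' - e)) * (2 * max (A' + e' - f z) 0) := by
  set D : ℝ := (A' - A) + (e' - e) with hDdef
  set K : ℝ := A' + e' - f z with hKdef
  have hD0 : (0:ℝ) ≤ D := by rw [hDdef]; linarith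
  have key : ∀ t ∈ Icc (0:ℝ) 1,
      (max (A' + e' * |t - w| - f t) 0)^2
        ≤ (max (A + e * |t - w| - f t) 0)^2 + D * (2 * max K 0) := by
    intro t ht
    have habs1 : |t - w| ≤ 1 := by
      rw [abs_le]; constructor <;> [linarith [ht.1, hw.2]; linarith [ht.2, hw.1]]
    have habs0 : (0:ℝ) ≤ |t - w| := abs_nonneg _
    apply em_sq_max_le
    · nlinarith [mul_le_mul_of_nonneg_right hee habs0]
    · have h1 : e' * |t - w| - e * |t - w| ≤ e' - e := by
        nlinarith [mul_le_mul_of_nonneg_left habs1 (by linarith : (0:ℝ) ≤ e' - e)]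
      rw [hDdef]; linarith
    · have h3 : f z ≤ f t := em_min_le hz t ht
      have h1 : e' * |t - w| ≤ e' := by
        nlinarith [mul_le_mul_of_nonneg_left habs1 (by linarith : (0:ℝ) ≤ e')]
      rw [hKdef]; linarith
    · exact hD0
  have h := intervalIntegral.integral_mono_on (μ := volume) zero_le_one
    (em_integrable hf hz A' e' w le_rfl zero_le_one le_rfl) ?_ key
  · calc emCost f A' e' w
        ≤ ∫ t in (0:ℝ)..1, ((max (A + e * |t - w| - f t) 0)^2 + D * (2 * max K 0)) := h
      _ = emCost f A e w + D * (2 * max K 0) := by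
          rw [intervalIntegral.integral_add (em_integrable hf hz A e w le_rfl zero_le_one le_rfl)
            intervalIntegrable_const]
          simp [emCost]
  · exact (em_integrable hf hz A e w le_rfl zero_le_one le_rfl).add intervalIntegrable_const

lemma em_tent_convex (v s w : ℝ) (hs : 0 ≤ s) :
    ConvexOn ℝ (Icc (0:ℝ) 1) (fun t => v + s * |t - w|) := by
  refine ⟨convex_Icc _ _, ?_⟩
  intro x _ y _ a b ha hb hab
  simp only [smul_eq_mul]
  have h1 : a • x + b • y - w = a * (x - w) + b * (y - w) := by
    simp only [smul_eq_mul]; linear_combination w * hab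
  have h2 : |a * (x - w) + b * (y - w)| ≤ a * |x - w| + b * |y - w| := by
    calc |a * (x - w) + b * (y - w)| ≤ |a * (x - w)| + |b * (y - w)| := abs_add_le _ _
      _ = a * |x - w| + b * |y - w| := by
          rw [abs_mul, abs_mul, abs_of_nonneg ha, abs_of_nonneg hb]
  have h3 : s * |a • x + b • y - w| ≤ s * (a * |x - w| + b * |y - w|) := by
    rw [h1]; exact mul_le_mul_of_nonneg_left h2 hs
  simp only [smul_eq_mul] at h3 ⊢
  have hv : a * v + b * v = v := by linear_combination v * hab
  nlinarith [h3, hv]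

lemma em_build {f : ℝ → ℝ} {z r w v : ℝ} (hf : ConvexOn ℝ (Icc (0:ℝ) 1) f)
    (hz : UniqueMinOn f z) (hr : 0 < r) (hw : w ∈ Icc (0:ℝ) 1) (hvf : f w ≤ v)
    (hc0 : emCost f v 0 0 < r^2) (hT : r^2 ≤ 2 * |w - z| * (v - f z)^2) :
    ∃ g w', ConvexOn ℝ (Icc (0:ℝ) 1) g ∧ UniqueMinOn g w' ∧ L2 f g = r ∧
      r ^ 2 / 2 ≤ |w' - z| * |g w' - f z| ^ 2 := by
  set B : ℝ := max (f 0) (f 1) with hB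
  set S : ℝ := max (4*(B - v) + 8*r) 1 with hSdef
  have hS1 : (1:ℝ) ≤ S := le_max_right _ _
  have hS0 : (0:ℝ) < S := lt_of_lt_of_le one_pos hS1
  have hS4 : 4*(B - v) + 8*r ≤ S := le_max_left _ _
  -- upper bound for IVT
  have hup : r^2 ≤ emCost f v S w := by
    have hptw : ∀ c d : ℝ, 0 ≤ c → c ≤ d → d ≤ 1 → (∀ t ∈ Icc c d, 1/4 ≤ |t - w|) →
        d - c = 1/4 → r^2 ≤ ∫ t in c..d, (max (v + S * |t - w| - f t) 0)^2 := by
      intro c d hc hcd hd hdist hlen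
      have hconst : (∫ _ in c..d, (2*r)^2) = r^2 := by
        rw [intervalIntegral.integral_const, smul_eq_mul, hlen]; ring
      rw [← hconst]
      apply intervalIntegral.integral_mono_on hcd intervalIntegrable_const
        (em_integrable hf hz v S w hc hcd hd)
      intro t ht
      have ht1 : t ∈ Icc (0:ℝ) 1 := ⟨le_trans hc ht.1, le_trans ht.2 hd⟩
      have h1 : 1/4 ≤ |t - w| := hdist t ht
      have h2 : S * (1/4) ≤ S * |t - w| := mul_le_mul_of_nonneg_left h1 hS0.le
      have h3 : f t ≤ B := em_upper hf t ht1
      have hX : 2*r ≤ v + S * |t - w| - f t := by nlinarith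
      have : 2*r ≤ max (v + S * |t - w| - f t) 0 := le_trans hX (le_max_left _ _)
      exact pow_le_pow_left₀ (by positivity) this 2
    rcases le_or_gt w (1/2) with hw2 | hw2
    · have key := hptw (3/4) 1 (by norm_num) (by norm_num) le_rfl ?_ (by norm_num)
      · refine le_trans key ?_
        apply intervalIntegral.integral_mono_interval (by norm_num) (by norm_num) le_rfl ?_
          (em_integrable hf hz v S w le_rfl zero_le_one le_rfl)
        filter_upwards with t
        positivity
      · intro t ht
        have : t - w ≥ 1/4 := by linarith [ht.1]
        rw [abs_of_nonneg (by linarith)]; linarith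
    · have key := hptw 0 (1/4) le_rfl (by norm_num) (by norm_num) ?_ (by norm_num)
      · refine le_trans key ?_
        apply intervalIntegral.integral_mono_interval le_rfl (by norm_num) (by norm_num) ?_
          (em_integrable hf hz v S w le_rfl zero_le_one le_rfl)
        filter_upwards with t
        positivity
      · intro t ht
        have : t - w ≤ -(1/4) := by linarith [ht.2]
        rw [abs_of_nonpos (by linarith)]; linarith
  -- Lipschitz continuity in slope
  set K : ℝ := 2 * max (v + S - f z) 0 with hKdef
  have hK0 : 0 ≤ K := by rw [hKdef]; positivity
  have hlip : LipschitzOnWith K.toNNReal (fun e => emCost f v e w) (Icc 0 S) := by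
    apply LipschitzOnWith.of_dist_le_mul
    have main : ∀ x ∈ Icc (0:ℝ) S, ∀ y ∈ Icc (0:ℝ) S, x ≤ y →
        emCost f v y w ≤ emCost f v x w + K * (y - x) := by
      intro x hx y hy hxy
      have h1 := em_cost_lip hf hz (le_refl v) hx.1 hxy hw
      have h2 : max (v + y - f z) 0 ≤ max (v + S - f z) 0 :=
        max_le_max (by linarith [hy.2]) le_rfl
      have h3 : (v - v + (y - x)) * (2 * max (v + y - f z) 0) ≤ (y - x) * K := by
        rw [hKdef]
        have : (0:ℝ) ≤ y - x := by linarith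
        have h4 : (0:ℝ) ≤ 2 * max (v + y - f z) 0 := by positivity
        nlinarith
      calc emCost f v y w ≤ emCost f v x w + (v - v + (y - x)) * (2 * max (v + y - f z) 0) :=
            h1
        _ ≤ emCost f v x w + K * (y - x) := by nlinarith [h3]
    intro x hx y hy
    rw [Real.dist_eq, Real.dist_eq, Real.coe_toNNReal _ hK0]
    rcases le_total x y with h | h
    · have hm := em_cost_mono hf hz w (le_refl v) h
      have := main x hx y hy h
      rw [abs_of_nonpos (by linarith), abs_of_nonpos (by linarith)]
      linarith
    · have hm := em_cost_mono hf hz w (le_refl v) h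
      have := main y hy x hx h
      rw [abs_of_nonneg (by linarith), abs_of_nonneg (by linarith)]
      linarith
  have hcont : ContinuousOn (fun e => emCost f v e w) (Icc 0 S) := hlip.continuousOn
  -- IVT
  have h0w : emCost f v 0 w = emCost f v 0 0 := em_cost_zero_slope f v w
  have hmem : r^2 ∈ Icc (emCost f v 0 w) (emCost f v S w) := ⟨by rw [h0w]; exact hc0.le, hup⟩
  obtain ⟨s, hsmem, hseq0⟩ := intermediate_value_Icc hS0.le hcont hmem
  have hseq : emCost f v s w = r^2 := hseq0
  have hs0 : 0 < s := by
    rcases eq_or_lt_of_le hsmem.1 with h | h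
    · exfalso; rw [← h] at hseq; rw [h0w] at hseq; linarith
    · exact h
  -- the perturbed function
  set g : ℝ → ℝ := fun t => max (f t) (v + s * |t - w|) with hgdef
  have hgw : g w = v := by
    rw [hgdef]; simp only [sub_self, abs_zero, mul_zero, add_zero]
    exact max_eq_right hvf
  refine ⟨g, w, ?_, ?_, ?_, ?_⟩
  · exact hf.sup (em_tent_convex v s w hs0.le)
  · refine ⟨hw, ?_⟩
    intro t ht hne
    rw [hgw]
    have h1 : 0 < |t - w| := abs_pos.mpr (sub_ne_zero.mpr hne)
    have h2 : v < v + s * |t - w| := by nlinarith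
    calc v < v + s * |t - w| := h2
      _ ≤ g t := le_max_right _ _
  · have hcong : (∫ t in (0:ℝ)..1, (f t - g t)^2)
        = ∫ t in (0:ℝ)..1, (max (v + s * |t - w| - f t) 0)^2 := by
      apply intervalIntegral.integral_congr
      intro t _
      rcases le_total (v + s * |t - w|) (f t) with h | h
      · rw [hgdef]
        simp only [max_eq_left h, max_eq_right (by linarith : v + s * |t - w| - f t ≤ 0)]
        simp [sub_self]
      · rw [hgdef]
        simp only [max_eq_right h, max_eq_left (by linarith : (0:ℝ) ≤ v + s * |t - w| - f t)]
        ring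
    rw [L2, hcong]
    have : (∫ t in (0:ℝ)..1, (max (v + s * |t - w| - f t) 0)^2) = r^2 := hseq
    rw [this, Real.sqrt_sq hr.le]
  · rw [hgw]
    have hvz : f z ≤ v := le_trans (em_min_le hz w hw) hvf
    rw [abs_of_nonneg (by linarith : (0:ℝ) ≤ v - f z)]
    linarith

lemma em_vanish (f : ℝ → ℝ) (u : ℝ) {c d : ℝ} (hcd : c ≤ d)
    (hzero : ∀ t ∈ Ioo c d, u ≤ f t) :
    (∫ t in c..d, (max (u + 0*|t - 0| - f t) 0)^2) = 0 := by
  have hcong : (∫ t in c..d, (max (u + 0*|t - 0| - f t) 0)^2) = ∫ _ in c..d, (0:ℝ) := by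
    apply intervalIntegral.integral_congr_ae
    have hae : ∀ᵐ (x : ℝ) ∂volume, x ≠ d := by
      rw [ae_iff]
      have : {x : ℝ | ¬ x ≠ d} = {d} := by ext x; simp
      rw [this]
      exact measure_singleton d
    filter_upwards [hae] with x hxd hmem
    rw [uIoc_of_le hcd] at hmem
    have hx : x ∈ Ioo c d := ⟨hmem.1, lt_of_le_of_ne hmem.2 hxd⟩
    have h1 := hzero x hx
    have h2 : u + 0*|x - 0| - f x ≤ 0 := by simp only [zero_mul, add_zero]; linarith
    rw [max_eq_right h2]
    norm_num
  rw [hcong]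
  simp

lemma em_piece {f : ℝ → ℝ} {z : ℝ} (hf : ConvexOn ℝ (Icc (0:ℝ) 1) f)
    (hz : UniqueMinOn f z) (u C : ℝ) {c d : ℝ}
    (hc : 0 ≤ c) (hcd : c ≤ d) (hd : d ≤ 1)
    (hptw : ∀ t ∈ Icc c d, (max (u + 0*|t - 0| - f t) 0)^2 ≤ C) :
    (∫ t in c..d, (max (u + 0*|t - 0| - f t) 0)^2) ≤ (d - c) * C := by
  have h := intervalIntegral.integral_mono_on hcd (em_integrable hf hz u 0 0 hc hcd hd)
    (intervalIntegrable_const (c := C)) hptw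
  calc (∫ t in c..d, (max (u + 0*|t - 0| - f t) 0)^2) ≤ ∫ _ in c..d, C := h
    _ = (d - c) * C := by rw [intervalIntegral.integral_const, smul_eq_mul]

set_option maxHeartbeats 2000000 in
lemma em_key {f : ℝ → ℝ} {z r : ℝ} (hf : ConvexOn ℝ (Icc (0:ℝ) 1) f)
    (hz : UniqueMinOn f z) (hr : 0 < r) :
    ∃ w v, w ∈ Icc (0:ℝ) 1 ∧ f w ≤ v ∧ emCost f v 0 0 < r^2 ∧
      r^2 ≤ 2 * |w - z| * (v - f z)^2 := by
  set m := f z with hm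
  set B : ℝ := max (f 0) (f 1) with hB
  set SS : Set ℝ := {u : ℝ | r^2 ≤ emCost f u 0 0} with hSS
  have hBmem : (B + r) ∈ SS := by
    rw [hSS]; simp only [mem_setOf_eq]
    have hconst : (∫ _ in (0:ℝ)..1, r^2) = r^2 := by simp
    rw [emCost, ← hconst]
    apply intervalIntegral.integral_mono_on zero_le_one intervalIntegrable_const
      (em_integrable hf hz (B + r) 0 0 le_rfl zero_le_one le_rfl)
    intro t ht
    have h1 : f t ≤ B := em_upper hf t ht
    have h2 : r ≤ B + r + 0 * |t - 0| - f t := by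
      simp only [zero_mul, add_zero]; linarith
    have h3 : r ≤ max (B + r + 0*|t - 0| - f t) 0 := le_trans h2 (le_max_left _ _)
    exact pow_le_pow_left₀ hr.le h3 2
  have hSSne : SS.Nonempty := ⟨B + r, hBmem⟩
  have hlb : ∀ u ∈ SS, m + r ≤ u := by
    intro u hu
    have h1 : r^2 ≤ emCost f u 0 0 := hu
    have h2 : emCost f u 0 0 ≤ (max (u - m) 0)^2 := em_cost_le_sq hf hz u 0
    have h3 : r ≤ max (u - m) 0 := by
      nlinarith only [h1, h2, le_max_right (u - m) (0:ℝ), hr]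
    rcases max_cases (u - m) (0:ℝ) with ⟨h4, _⟩ | ⟨h4, _⟩
    · rw [h4] at h3; linarith
    · rw [h4] at h3; linarith
  have hbdd : BddBelow SS := ⟨m + r, hlb⟩
  set u₀ : ℝ := sInf SS with hu₀
  have hu₀m : m + r ≤ u₀ := le_csInf hSSne hlb
  have hphi : r^2 ≤ emCost f u₀ 0 0 := by
    by_contra hcon
    push_neg at hcon
    set K2 : ℝ := 2 * max (u₀ + 1 - m) 0 with hK2
    have hK20 : 0 ≤ K2 := by rw [hK2]; positivity
    set ε : ℝ := min ((r^2 - emCost f u₀ 0 0)/(K2+1)) 1 with hε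
    have hεpos : 0 < ε := by
      rw [hε]; exact lt_min (div_pos (by linarith) (by linarith)) one_pos
    obtain ⟨u, huS, hult⟩ := Real.lt_sInf_add_pos hSSne hεpos
    have hu₀u : u₀ ≤ u := csInf_le hbdd huS
    rw [← hu₀] at hult
    have hε1 : ε ≤ 1 := min_le_right _ _
    have hl := em_cost_lip hf hz hu₀u (le_refl (0:ℝ)) (le_refl (0:ℝ))
      (show (0:ℝ) ∈ Icc (0:ℝ) 1 from ⟨le_rfl, zero_le_one⟩)
    have h5 : max (u + 0 - m) 0 ≤ max (u₀ + 1 - m) 0 :=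
      max_le_max (by linarith) le_rfl
    have h6 : emCost f u 0 0 ≤ emCost f u₀ 0 0 + (u - u₀) * K2 := by
      have h7 : ((u - u₀) + ((0:ℝ) - 0)) * (2 * max (u + 0 - m) 0)
          ≤ (u - u₀) * K2 := by
        rw [hK2]
        have h8 : (0:ℝ) ≤ u - u₀ := by linarith
        nlinarith only [h5, h8, le_max_right (u + 0 - m) (0:ℝ)]
      calc emCost f u 0 0
          ≤ emCost f u₀ 0 0 + ((u - u₀) + ((0:ℝ) - 0)) * (2 * max (u + 0 - m) 0) := hl
        _ ≤ emCost f u₀ 0 0 + (u - u₀) * K2 := by linarith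
    have h9 : (u - u₀) * K2 ≤ ε * K2 :=
      mul_le_mul_of_nonneg_right (by linarith) hK20
    have h10 : ε * K2 ≤ ((r^2 - emCost f u₀ 0 0)/(K2+1)) * K2 :=
      mul_le_mul_of_nonneg_right (min_le_left _ _) hK20
    have h11 : ((r^2 - emCost f u₀ 0 0)/(K2+1)) * K2 < r^2 - emCost f u₀ 0 0 := by
      rw [div_mul_eq_mul_div, div_lt_iff₀ (by linarith)]
      nlinarith only [hcon, hK20]
    have h12 : r^2 ≤ emCost f u 0 0 := huS
    linarith
  set TT : Set ℝ := {t : ℝ | t ∈ Icc (0:ℝ) 1 ∧ f t ≤ u₀} with hTT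
  have hzT : z ∈ TT := ⟨hz.1, by rw [← hm]; linarith⟩
  have hTne : TT.Nonempty := ⟨z, hzT⟩
  have hTbddA : BddAbove TT := ⟨1, fun t ht => ht.1.2⟩
  have hTbddB : BddBelow TT := ⟨0, fun t ht => ht.1.1⟩
  set a : ℝ := sInf TT with ha
  set b : ℝ := sSup TT with hb
  have haz : a ≤ z := csInf_le hTbddB hzT
  have hzb : z ≤ b := le_csSup hTbddA hzT
  have ha0 : 0 ≤ a := le_csInf hTne (fun t ht => ht.1.1)
  have hb1 : b ≤ 1 := csSup_le hTne (fun t ht => ht.1.2)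
  have hz0 : 0 ≤ z := hz.1.1
  have hz1 : z ≤ 1 := hz.1.2
  have hvan1 : ∀ t ∈ Ioo (0:ℝ) a, u₀ ≤ f t := by
    intro t ht
    by_contra hcon; push_neg at hcon
    have htT : t ∈ TT := ⟨⟨ht.1.le, by linarith [ht.2]⟩, hcon.le⟩
    have := csInf_le hTbddB htT
    rw [← ha] at this
    linarith [ht.2]
  have hvan2 : ∀ t ∈ Ioo b (1:ℝ), u₀ ≤ f t := by
    intro t ht
    by_contra hcon; push_neg at hcon
    have htT : t ∈ TT := ⟨⟨by linarith [ht.1], ht.2.le⟩, hcon.le⟩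
    have := le_csSup hTbddA htT
    rw [← hb] at this
    linarith [ht.1]
  have hz10 : (∫ t in (0:ℝ)..a, (max (u₀ + 0*|t - 0| - f t) 0)^2) = 0 :=
    em_vanish f u₀ ha0 hvan1
  have hz11 : (∫ t in b..(1:ℝ), (max (u₀ + 0*|t - 0| - f t) 0)^2) = 0 :=
    em_vanish f u₀ hb1 hvan2
  have hiab : IntervalIntegrable (fun t => (max (u₀ + 0*|t - 0| - f t) 0)^2) volume a b :=
    em_integrable hf hz u₀ 0 0 ha0 (haz.trans hzb) hb1
  have hsplit : emCost f u₀ 0 0 = ∫ t in a..b, (max (u₀ + 0*|t - 0| - f t) 0)^2 := by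
    have h1 := intervalIntegral.integral_add_adjacent_intervals
      (em_integrable hf hz u₀ 0 0 (c := 0) (d := a) le_rfl ha0 (by linarith))
      hiab
    have h2 := intervalIntegral.integral_add_adjacent_intervals
      (em_integrable hf hz u₀ 0 0 (c := 0) (d := b) le_rfl (ha0.trans (haz.trans hzb)) hb1)
      (em_integrable hf hz u₀ 0 0 (c := b) (d := 1) (ha0.trans (haz.trans hzb)) hb1 le_rfl)
    rw [emCost]
    linarith [h1, h2, hz10, hz11]
  have habQ : r^2 ≤ ∫ t in a..b, (max (u₀ + 0*|t - 0| - f t) 0)^2 := by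
    rw [← hsplit]; exact hphi
  have hab : a < b := by
    rcases lt_or_ge a b with h | h
    · exact h
    · exfalso
      have he : a = b := le_antisymm (haz.trans hzb) h
      rw [he, intervalIntegral.integral_same] at habQ
      nlinarith only [habQ, mul_pos hr hr]
  set ρ : ℝ := u₀ - m with hρ
  have hρr : r ≤ ρ := by rw [hρ]; linarith
  have hQle : ∀ t ∈ Icc (0:ℝ) 1, (max (u₀ + 0*|t - 0| - f t) 0)^2 ≤ ρ^2 := by
    intro t ht
    have hmle := em_min_le hz t ht
    have h1 : u₀ + 0*|t - 0| - f t ≤ ρ := by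
      simp only [zero_mul, add_zero]; rw [hρ, hm]; linarith
    have h2 : max (u₀ + 0*|t - 0| - f t) 0 ≤ ρ := max_le h1 (by linarith)
    exact pow_le_pow_left₀ (le_max_right _ _) h2 2
  rcases le_total (z - a) (b - z) with hside | hside
  · -- RIGHT case
    set d : ℝ := b - z with hd
    have hd0 : 0 < d := by rw [hd]; linarith
    have hI1mem : z + d/4 ∈ Icc (0:ℝ) 1 := ⟨by linarith, by linarith⟩
    have hη : 0 < f (z + d/4) - m := by
      have := hz.2 (z + d/4) hI1mem (by intro hc; linarith [hc.symm.le, hc.le])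
      rw [hm]; linarith
    set η := f (z + d/4) - m with hηdef
    set ε₀ : ℝ := min η r with hε₀
    have hε₀0 : 0 < ε₀ := lt_min hη hr
    have hε₀r : ε₀ ≤ r := min_le_right _ _
    have hε₀η : ε₀ ≤ η := min_le_left _ _
    have hQwin : ∀ t ∈ Icc (z + d/4) (z + d/2),
        (max (u₀ + 0*|t - 0| - f t) 0)^2 ≤ ρ^2 - r*ε₀ := by
      intro t ht
      have htIcc : t ∈ Icc (0:ℝ) 1 := ⟨by linarith [ht.1], by linarith [ht.2]⟩
      have hmono : f (z + d/4) ≤ f t := by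
        rcases eq_or_lt_of_le ht.1 with h | h
        · rw [← h]
        · exact (em_mono_right hf hz (by linarith) h htIcc.2).le
      rcases le_total (f t) u₀ with hcase | hcase
      · have hqe : max (u₀ + 0*|t - 0| - f t) 0 = u₀ - f t := by
          rw [max_eq_left (by simp only [zero_mul, add_zero]; linarith)]
          simp only [zero_mul, add_zero]
        rw [hqe]
        have h1 : u₀ - f t ≤ ρ - ε₀ := by
          rw [hρ]
          have h2 : m + ε₀ ≤ f t := by rw [hηdef] at hε₀η; linarith
          linarith
        have h2 : 0 ≤ u₀ - f t := by linarith
        have k1 : (u₀ - f t)^2 ≤ (ρ - ε₀)^2 := pow_le_pow_left₀ h2 h1 2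
        have h4 : 0 ≤ ε₀*(2*ρ - ε₀ - r) := mul_nonneg hε₀0.le (by linarith)
        nlinarith only [k1, h4]
      · have hqe : max (u₀ + 0*|t - 0| - f t) 0 = 0 :=
          max_eq_right (by simp only [zero_mul, add_zero]; linarith)
        rw [hqe]
        have k2 : r*r ≤ ρ*ρ := mul_le_mul hρr hρr hr.le (le_trans hr.le hρr)
        have k3 : 0 ≤ r*(r - ε₀) := mul_nonneg hr.le (by linarith)
        nlinarith only [k2, k3]
    set θ : ℝ := (d/4) * (r * ε₀) with hθ
    have hθ0 : 0 < θ := by rw [hθ]; positivity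
    clear_value m B u₀ a b ρ d η ε₀ θ
    have hp1 : (∫ t in a..(z + d/4), (max (u₀ + 0*|t - 0| - f t) 0)^2)
        ≤ ((z + d/4) - a) * ρ^2 :=
      em_piece hf hz u₀ (ρ^2) ha0 (by linarith) (by linarith)
        (fun t ht => hQle t ⟨by linarith [ht.1], by linarith [ht.2]⟩)
    have hp2 : (∫ t in (z + d/4)..(z + d/2), (max (u₀ + 0*|t - 0| - f t) 0)^2)
        ≤ ((z + d/2) - (z + d/4)) * (ρ^2 - r*ε₀) :=
      em_piece hf hz u₀ (ρ^2 - r*ε₀) (by linarith) (by linarith) (by linarith) hQwin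
    have hp3 : (∫ t in (z + d/2)..b, (max (u₀ + 0*|t - 0| - f t) 0)^2)
        ≤ (b - (z + d/2)) * ρ^2 :=
      em_piece hf hz u₀ (ρ^2) (by linarith) (by linarith) hb1
        (fun t ht => hQle t ⟨by linarith [ht.1], by linarith [ht.2]⟩)
    have hsum : (∫ t in a..b, (max (u₀ + 0*|t - 0| - f t) 0)^2)
        = (∫ t in a..(z + d/4), (max (u₀ + 0*|t - 0| - f t) 0)^2)
          + (∫ t in (z + d/4)..(z + d/2), (max (u₀ + 0*|t - 0| - f t) 0)^2)
          + (∫ t in (z + d/2)..b, (max (u₀ + 0*|t - 0| - f t) 0)^2) := by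
      have h1 := intervalIntegral.integral_add_adjacent_intervals
        (em_integrable hf hz u₀ 0 0 (c := a) (d := z + d/4) ha0 (by linarith) (by linarith))
        (em_integrable hf hz u₀ 0 0 (c := z + d/4) (d := z + d/2) (by linarith) (by linarith)
          (by linarith))
      have h2 := intervalIntegral.integral_add_adjacent_intervals
        (em_integrable hf hz u₀ 0 0 (c := a) (d := z + d/2) ha0 (by linarith) (by linarith))
        (em_integrable hf hz u₀ 0 0 (c := z + d/2) (d := b) (by linarith) (by linarith) hb1)
      linarith [h1, h2]
    have hmain : r^2 ≤ 2*d*ρ^2 - θ := by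
      have hba : b - a ≤ 2*d := by rw [hd]; linarith
      have hgr : (b - a)*ρ^2 ≤ 2*d*ρ^2 := mul_le_mul_of_nonneg_right hba (sq_nonneg ρ)
      have hkey : ((z + d/4) - a) * ρ^2 + ((z + d/2) - (z + d/4)) * (ρ^2 - r*ε₀)
          + (b - (z + d/2)) * ρ^2 = (b - a)*ρ^2 - (d/4)*(r*ε₀) := by ring
      have hQab : (∫ t in a..b, (max (u₀ + 0*|t - 0| - f t) 0)^2)
          ≤ (b - a)*ρ^2 - (d/4)*(r*ε₀) := by
        rw [hsum, ← hkey]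
        exact add_le_add (add_le_add hp1 hp2) hp3
      rw [hθ]
      have hfin := le_trans habQ hQab
      linarith only [hfin, hgr]
    set ε : ℝ := min (min (d/2) (r/2)) (θ/(2*(ρ^2 + 2*d*ρ) + 1)) with hεdef
    have hρ0 : (0:ℝ) < ρ := lt_of_lt_of_le hr hρr
    have hden : (0:ℝ) < 2*(ρ^2 + 2*d*ρ) + 1 := by
      nlinarith only [mul_pos hd0 hρ0, sq_nonneg ρ]
    have hεpos : 0 < ε :=
      lt_min (lt_min (by linarith) (by linarith)) (div_pos hθ0 hden)
    have hεd : ε ≤ d/2 := le_trans (min_le_left _ _) (min_le_left _ _)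
    have hεr : ε ≤ r/2 := le_trans (min_le_left _ _) (min_le_right _ _)
    have hεθ' : ε ≤ θ/(2*(ρ^2 + 2*d*ρ) + 1) := min_le_right _ _
    clear_value ε
    have hwIcc : b - ε ∈ Icc (0:ℝ) 1 := ⟨by linarith, by linarith⟩
    have hfw : f (b - ε) < u₀ := by
      obtain ⟨t', ht'T, hwt'⟩ := exists_lt_of_lt_csSup hTne (show b - ε < sSup TT by
        rw [← hb]; linarith)
      have h1 : f (b - ε) < f t' :=
        em_mono_right hf hz (by linarith) hwt' ht'T.1.2
      linarith [ht'T.2]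
    refine ⟨b - ε, max (f (b - ε)) (u₀ - ε), hwIcc, le_max_left _ _, ?_, ?_⟩
    · have hvlt : max (f (b - ε)) (u₀ - ε) < u₀ := max_lt hfw (by linarith)
      by_contra hcon
      push_neg at hcon
      have hmem : max (f (b - ε)) (u₀ - ε) ∈ SS := hcon
      have := csInf_le hbdd hmem
      rw [← hu₀] at this
      linarith
    · have h1 : |b - ε - z| = d - ε := by
        rw [abs_of_nonneg (by linarith)]; rw [hd]; ring
      rw [h1]
      have hv1 : ρ - ε ≤ max (f (b - ε)) (u₀ - ε) - m := by
        have := le_max_right (f (b - ε)) (u₀ - ε); rw [hρ]; linarith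
      have hv0 : 0 ≤ ρ - ε := by linarith
      have hsq : (ρ - ε)^2 ≤ (max (f (b - ε)) (u₀ - ε) - m)^2 :=
        pow_le_pow_left₀ hv0 hv1 2
      have hexp : 2*d*ρ^2 - θ ≤ 2*(d - ε)*(ρ - ε)^2 := by
        have h2 : ε*(2*(ρ^2 + 2*d*ρ) + 1) ≤ θ := (le_div_iff₀ hden).mp hεθ'
        have h3 : 0 ≤ ε^2*(d + 2*ρ - ε) := mul_nonneg (sq_nonneg ε) (by linarith)
        nlinarith only [h2, h3, hεpos.le]
      have hde : 0 ≤ d - ε := by linarith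
      have hstep : 2*(d - ε)*(ρ - ε)^2 ≤ 2*(d - ε)*(max (f (b - ε)) (u₀ - ε) - m)^2 :=
        mul_le_mul_of_nonneg_left hsq (by linarith)
      linarith [hmain, hexp, hstep]
  · -- LEFT case
    set d : ℝ := z - a with hd
    have hd0 : 0 < d := by rw [hd]; linarith
    have hI1mem : z - d/4 ∈ Icc (0:ℝ) 1 := ⟨by linarith, by linarith⟩
    have hη : 0 < f (z - d/4) - m := by
      have := hz.2 (z - d/4) hI1mem (by intro hc; linarith [hc.symm.le, hc.le])
      rw [hm]; linarith
    set η := f (z - d/4) - m with hηdef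
    set ε₀ : ℝ := min η r with hε₀
    have hε₀0 : 0 < ε₀ := lt_min hη hr
    have hε₀r : ε₀ ≤ r := min_le_right _ _
    have hε₀η : ε₀ ≤ η := min_le_left _ _
    have hQwin : ∀ t ∈ Icc (z - d/2) (z - d/4),
        (max (u₀ + 0*|t - 0| - f t) 0)^2 ≤ ρ^2 - r*ε₀ := by
      intro t ht
      have htIcc : t ∈ Icc (0:ℝ) 1 := ⟨by linarith [ht.1], by linarith [ht.2]⟩
      have hmono : f (z - d/4) ≤ f t := by
        rcases eq_or_lt_of_le ht.2 with h | h
        · rw [h]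
        · exact (em_mono_left hf hz htIcc.1 h (by linarith)).le
      rcases le_total (f t) u₀ with hcase | hcase
      · have hqe : max (u₀ + 0*|t - 0| - f t) 0 = u₀ - f t := by
          rw [max_eq_left (by simp only [zero_mul, add_zero]; linarith)]
          simp only [zero_mul, add_zero]
        rw [hqe]
        have h1 : u₀ - f t ≤ ρ - ε₀ := by
          rw [hρ]
          have h2 : m + ε₀ ≤ f t := by rw [hηdef] at hε₀η; linarith
          linarith
        have h2 : 0 ≤ u₀ - f t := by linarith
        have k1 : (u₀ - f t)^2 ≤ (ρ - ε₀)^2 := pow_le_pow_left₀ h2 h1 2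
        have h4 : 0 ≤ ε₀*(2*ρ - ε₀ - r) := mul_nonneg hε₀0.le (by linarith)
        nlinarith only [k1, h4]
      · have hqe : max (u₀ + 0*|t - 0| - f t) 0 = 0 :=
          max_eq_right (by simp only [zero_mul, add_zero]; linarith)
        rw [hqe]
        have k2 : r*r ≤ ρ*ρ := mul_le_mul hρr hρr hr.le (le_trans hr.le hρr)
        have k3 : 0 ≤ r*(r - ε₀) := mul_nonneg hr.le (by linarith)
        nlinarith only [k2, k3]
    set θ : ℝ := (d/4) * (r * ε₀) with hθ
    have hθ0 : 0 < θ := by rw [hθ]; positivity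
    clear_value m B u₀ a b ρ d η ε₀ θ
    have hp1 : (∫ t in a..(z - d/2), (max (u₀ + 0*|t - 0| - f t) 0)^2)
        ≤ ((z - d/2) - a) * ρ^2 :=
      em_piece hf hz u₀ (ρ^2) ha0 (by linarith) (by linarith)
        (fun t ht => hQle t ⟨by linarith [ht.1], by linarith [ht.2]⟩)
    have hp2 : (∫ t in (z - d/2)..(z - d/4), (max (u₀ + 0*|t - 0| - f t) 0)^2)
        ≤ ((z - d/4) - (z - d/2)) * (ρ^2 - r*ε₀) :=
      em_piece hf hz u₀ (ρ^2 - r*ε₀) (by linarith) (by linarith) (by linarith) hQwin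
    have hp3 : (∫ t in (z - d/4)..b, (max (u₀ + 0*|t - 0| - f t) 0)^2)
        ≤ (b - (z - d/4)) * ρ^2 :=
      em_piece hf hz u₀ (ρ^2) (by linarith) (by linarith) hb1
        (fun t ht => hQle t ⟨by linarith [ht.1], by linarith [ht.2]⟩)
    have hsum : (∫ t in a..b, (max (u₀ + 0*|t - 0| - f t) 0)^2)
        = (∫ t in a..(z - d/2), (max (u₀ + 0*|t - 0| - f t) 0)^2)
          + (∫ t in (z - d/2)..(z - d/4), (max (u₀ + 0*|t - 0| - f t) 0)^2)
          + (∫ t in (z - d/4)..b, (max (u₀ + 0*|t - 0| - f t) 0)^2) := by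
      have h1 := intervalIntegral.integral_add_adjacent_intervals
        (em_integrable hf hz u₀ 0 0 (c := a) (d := z - d/2) ha0 (by linarith) (by linarith))
        (em_integrable hf hz u₀ 0 0 (c := z - d/2) (d := z - d/4) (by linarith) (by linarith)
          (by linarith))
      have h2 := intervalIntegral.integral_add_adjacent_intervals
        (em_integrable hf hz u₀ 0 0 (c := a) (d := z - d/4) ha0 (by linarith) (by linarith))
        (em_integrable hf hz u₀ 0 0 (c := z - d/4) (d := b) (by linarith) (by linarith) hb1)
      linarith [h1, h2]
    have hmain : r^2 ≤ 2*d*ρ^2 - θ := by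
      have hba : b - a ≤ 2*d := by rw [hd]; linarith
      have hnn : 0 ≤ (2*d - (b - a))*ρ^2 := mul_nonneg (by linarith) (sq_nonneg ρ)
      rw [hθ]
      nlinarith [habQ, hsum, hp1, hp2, hp3, hnn]
    set ε : ℝ := min (min (d/2) (r/2)) (θ/(2*(ρ^2 + 2*d*ρ) + 1)) with hεdef
    have hρ0 : (0:ℝ) < ρ := lt_of_lt_of_le hr hρr
    have hden : (0:ℝ) < 2*(ρ^2 + 2*d*ρ) + 1 := by
      nlinarith only [mul_pos hd0 hρ0, sq_nonneg ρ]
    have hεpos : 0 < ε :=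
      lt_min (lt_min (by linarith) (by linarith)) (div_pos hθ0 hden)
    have hεd : ε ≤ d/2 := le_trans (min_le_left _ _) (min_le_left _ _)
    have hεr : ε ≤ r/2 := le_trans (min_le_left _ _) (min_le_right _ _)
    have hεθ' : ε ≤ θ/(2*(ρ^2 + 2*d*ρ) + 1) := min_le_right _ _
    clear_value ε
    have hwIcc : a + ε ∈ Icc (0:ℝ) 1 := ⟨by linarith, by linarith⟩
    have hfw : f (a + ε) < u₀ := by
      obtain ⟨t', ht'T, hwt'⟩ := exists_lt_of_csInf_lt hTne (show sInf TT < a + ε by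
        rw [← ha]; linarith)
      have h1 : f (a + ε) < f t' :=
        em_mono_left hf hz ht'T.1.1 hwt' (by linarith)
      linarith [ht'T.2]
    refine ⟨a + ε, max (f (a + ε)) (u₀ - ε), hwIcc, le_max_left _ _, ?_, ?_⟩
    · have hvlt : max (f (a + ε)) (u₀ - ε) < u₀ := max_lt hfw (by linarith)
      by_contra hcon
      push_neg at hcon
      have hmem : max (f (a + ε)) (u₀ - ε) ∈ SS := hcon
      have := csInf_le hbdd hmem
      rw [← hu₀] at this
      linarith
    · have h1 : |a + ε - z| = d - ε := by
        rw [abs_of_nonpos (by linarith)]; rw [hd]; ring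
      rw [h1]
      have hv1 : ρ - ε ≤ max (f (a + ε)) (u₀ - ε) - m := by
        have := le_max_right (f (a + ε)) (u₀ - ε); rw [hρ]; linarith
      have hv0 : 0 ≤ ρ - ε := by linarith
      have hsq : (ρ - ε)^2 ≤ (max (f (a + ε)) (u₀ - ε) - m)^2 :=
        pow_le_pow_left₀ hv0 hv1 2
      have hexp : 2*d*ρ^2 - θ ≤ 2*(d - ε)*(ρ - ε)^2 := by
        have h2 : ε*(2*(ρ^2 + 2*d*ρ) + 1) ≤ θ := (le_div_iff₀ hden).mp hεθ'
        have h3 : 0 ≤ ε^2*(d + 2*ρ - ε) := mul_nonneg (sq_nonneg ε) (by linarith)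
        nlinarith only [h2, h3, hεpos.le]
      have hde : 0 ≤ d - ε := by linarith
      have hstep : 2*(d - ε)*(ρ - ε)^2 ≤ 2*(d - ε)*(max (f (a + ε)) (u₀ - ε) - m)^2 :=
        mul_le_mul_of_nonneg_left hsq (by linarith)
      linarith [hmain, hexp, hstep]

/-- Entanglement inequality: for convex f with unique minimizer z and any r > 0,
there is a convex g with unique minimizer w, ‖f - g‖₂ = r, and
|Z(g) - Z(f)|·|M(g) - M(f)|² ≥ r²/2. -/
theorem stmt6 (f : ℝ → ℝ) (z r : ℝ)
    (hf : ConvexOn ℝ (Icc (0:ℝ) 1) f) (hz : UniqueMinOn f z) (hr : 0 < r) :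
    ∃ g w, ConvexOn ℝ (Icc (0:ℝ) 1) g ∧ UniqueMinOn g w ∧ L2 f g = r ∧
      r ^ 2 / 2 ≤ |w - z| * |g w - f z| ^ 2 := by
  obtain ⟨w, v, hw, hvf, hc0, hT⟩ := em_key hf hz hr
  exact em_build hf hz hr hw hvf hc0 hT
end

section
/- For f(t) = |t − 1/2|^k on [0,1] with k ≥ 1 and ε > 0 small, the water-filling width satisfies ρ_z(ε; f) = min{ ((2k+1)(k+1)/(4k^2))^{1/(2k+1)} ε^{2/(2k+1)}, 1/2 }. -/
open MeasureTheory Set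

namespace Stmt10Aux

lemma cont_F (k : ℝ) (hk : 0 ≤ k) : Continuous fun t : ℝ => |t - 1/2| ^ k :=
  (continuous_abs.comp (continuous_id.sub continuous_const)).rpow_const fun _ => Or.inr hk

lemma L2_trunc_eq (k u : ℝ) :
    L2 (fun t => |t - 1/2| ^ k) (trunc (fun t => |t - 1/2| ^ k) u)
      = Real.sqrt (∫ t in (0:ℝ)..1, (max (u - |t - 1/2| ^ k) 0) ^ 2) := by
  unfold L2 trunc
  congr 1
  apply intervalIntegral.integral_congr
  intro t _
  dsimp only
  rcases le_total (|t - 1/2| ^ k) u with h | h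
  · rw [max_eq_right h, max_eq_left (by linarith)]; ring
  · rw [max_eq_left h, max_eq_right (by linarith)]; ring

lemma mem_S_iff (k ε u : ℝ) (hε : 0 < ε) :
    L2 (fun t => |t - 1/2| ^ k) (trunc (fun t => |t - 1/2| ^ k) u) ≤ ε
      ↔ (∫ t in (0:ℝ)..1, (max (u - |t - 1/2| ^ k) 0) ^ 2) ≤ ε ^ 2 := by
  rw [L2_trunc_eq, Real.sqrt_le_left hε.le]

lemma key_integral (k r : ℝ) (hk : 1 ≤ k) (hr0 : 0 ≤ r) (hr : r ≤ 1/2) :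
    (∫ t in (0:ℝ)..1, (max (r ^ k - |t - 1/2| ^ k) 0) ^ 2)
      = 4 * k ^ 2 / ((k + 1) * (2 * k + 1)) * r ^ (2 * k + 1) := by
  have hk0 : (0:ℝ) < k := lt_of_lt_of_le one_pos hk
  rcases eq_or_lt_of_le hr0 with h0 | hrpos
  · rw [← h0]
    have hz : ∀ t : ℝ, max ((0:ℝ) ^ k - |t - 1/2| ^ k) 0 = 0 := fun t => by
      rw [Real.zero_rpow hk0.ne']
      exact max_eq_right (by simpa using Real.rpow_nonneg (abs_nonneg _) k)
    simp only [hz]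
    rw [Real.zero_rpow (by linarith : 2*k+1 ≠ 0)]
    simp
  · have habs : Continuous fun t : ℝ => |t - 1/2| ^ k := cont_F k hk0.le
    have hgcont : Continuous fun t : ℝ => (max (r ^ k - |t - 1/2| ^ k) 0) ^ 2 :=
      ((continuous_const.sub habs).max continuous_const).pow 2
    have hhcont : Continuous fun s : ℝ => (r ^ k - |s| ^ k) ^ 2 :=
      (continuous_const.sub (continuous_abs.rpow_const fun _ => Or.inr hk0.le)).pow 2
    have hFge : ∀ t : ℝ, r ≤ |t - 1/2| → (max (r ^ k - |t - 1/2| ^ k) 0) ^ 2 = 0 := by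
      intro t ht
      rw [max_eq_right (sub_nonpos.mpr (Real.rpow_le_rpow hr0 ht hk0.le))]
      simp
    have hzero1 : (∫ t in (0:ℝ)..(1/2 - r), (max (r ^ k - |t - 1/2| ^ k) 0) ^ 2) = 0 := by
      rw [intervalIntegral.integral_congr (g := fun _ => (0:ℝ)) ?_]
      · simp
      · intro t ht
        rw [Set.uIcc_of_le (by linarith : (0:ℝ) ≤ 1/2 - r)] at ht
        exact hFge t (by rw [abs_of_nonpos (by linarith [ht.2])]; linarith [ht.2])
    have hzero2 : (∫ t in (1/2 + r)..(1:ℝ), (max (r ^ k - |t - 1/2| ^ k) 0) ^ 2) = 0 := by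
      rw [intervalIntegral.integral_congr (g := fun _ => (0:ℝ)) ?_]
      · simp
      · intro t ht
        rw [Set.uIcc_of_le (by linarith : 1/2 + r ≤ (1:ℝ))] at ht
        exact hFge t (by rw [abs_of_nonneg (by linarith [ht.1])]; linarith [ht.1])
    have hmid1 : (∫ t in (1/2 - r)..(1/2 + r), (max (r ^ k - |t - 1/2| ^ k) 0) ^ 2)
        = ∫ t in (1/2 - r)..(1/2 + r), (r ^ k - |t - 1/2| ^ k) ^ 2 := by
      apply intervalIntegral.integral_congr
      intro t ht
      dsimp only
      rw [Set.uIcc_of_le (by linarith : 1/2 - r ≤ 1/2 + r)] at ht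
      have habs' : |t - 1/2| ≤ r := abs_le.mpr ⟨by linarith [ht.1], by linarith [ht.2]⟩
      rw [max_eq_left (sub_nonneg.mpr (Real.rpow_le_rpow (abs_nonneg _) habs' hk0.le))]
    have hmid2 : (∫ t in (1/2 - r)..(1/2 + r), (r ^ k - |t - 1/2| ^ k) ^ 2)
        = ∫ s in (-r)..r, (r ^ k - |s| ^ k) ^ 2 := by
      have h := intervalIntegral.integral_comp_sub_right
        (a := 1/2 - r) (b := 1/2 + r) (fun s => (r ^ k - |s| ^ k) ^ 2) (1/2)
      rw [show (1:ℝ)/2 - r - 1/2 = -r by ring, show (1:ℝ)/2 + r - 1/2 = r by ring] at h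
      exact h
    have hneg : (∫ s in (-r)..(0:ℝ), (r ^ k - |s| ^ k) ^ 2)
        = ∫ s in (0:ℝ)..r, (r ^ k - |s| ^ k) ^ 2 := by
      have h := intervalIntegral.integral_comp_neg
        (a := (0:ℝ)) (b := r) (f := fun s => (r ^ k - |s| ^ k) ^ 2)
      simp only [abs_neg, neg_zero] at h
      exact h.symm
    have hdrop : (∫ s in (0:ℝ)..r, (r ^ k - |s| ^ k) ^ 2)
        = ∫ s in (0:ℝ)..r, (r ^ (2*k) - 2 * r ^ k * s ^ k + s ^ (2*k)) := by
      apply intervalIntegral.integral_congr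
      intro s hs
      dsimp only
      rw [Set.uIcc_of_le hr0] at hs
      have hs0 : 0 ≤ s := hs.1
      have sq_rpow : ∀ x : ℝ, 0 ≤ x → (x ^ k) ^ (2:ℕ) = x ^ (2*k) := fun x hx => by
        rw [← Real.rpow_natCast (x ^ k) 2, ← Real.rpow_mul hx]
        norm_num [mul_comm]
      rw [abs_of_nonneg hs0,
        show (r ^ k - s ^ k) ^ 2 = (r ^ k) ^ (2:ℕ) - 2 * r ^ k * s ^ k + (s ^ k) ^ (2:ℕ) by ring,
        sq_rpow r hr0, sq_rpow s hs0]
    have hintk : IntervalIntegrable (fun s : ℝ => s ^ k) volume 0 r :=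
      intervalIntegral.intervalIntegrable_rpow' (by linarith)
    have hint2k : IntervalIntegrable (fun s : ℝ => s ^ (2*k)) volume 0 r :=
      intervalIntegral.intervalIntegrable_rpow' (by linarith)
    have hval : (∫ s in (0:ℝ)..r, (r ^ (2*k) - 2 * r ^ k * s ^ k + s ^ (2*k)))
        = r ^ (2*k) * r - 2 * r ^ k * (r ^ (k+1) / (k+1)) + r ^ (2*k+1) / (2*k+1) := by
      rw [intervalIntegral.integral_add
            (intervalIntegrable_const.sub (hintk.const_mul (2 * r ^ k))) hint2k,
          intervalIntegral.integral_sub intervalIntegrable_const (hintk.const_mul (2 * r ^ k)),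
          intervalIntegral.integral_const, intervalIntegral.integral_const_mul,
          integral_rpow (Or.inl (by linarith : (-1:ℝ) < k)),
          integral_rpow (Or.inl (by linarith : (-1:ℝ) < 2*k)),
          Real.zero_rpow (by linarith : k + 1 ≠ 0),
          Real.zero_rpow (by linarith : 2*k + 1 ≠ 0)]
      simp [smul_eq_mul]
      ring
    have hA1 : r ^ (2*k+1) = r ^ (2*k) * r := by
      rw [Real.rpow_add hrpos, Real.rpow_one]
    have hA2 : r ^ (2*k+1) = r ^ k * r ^ (k+1) := by
      rw [show 2*k+1 = k + (k+1) by ring, Real.rpow_add hrpos]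
    calc (∫ t in (0:ℝ)..1, (max (r ^ k - |t - 1/2| ^ k) 0) ^ 2)
        = (∫ t in (0:ℝ)..(1/2 - r), (max (r ^ k - |t - 1/2| ^ k) 0) ^ 2)
          + ((∫ t in (1/2 - r)..(1/2 + r), (max (r ^ k - |t - 1/2| ^ k) 0) ^ 2)
          + (∫ t in (1/2 + r)..(1:ℝ), (max (r ^ k - |t - 1/2| ^ k) 0) ^ 2)) := by
          rw [intervalIntegral.integral_add_adjacent_intervals
                (hgcont.intervalIntegrable _ _) (hgcont.intervalIntegrable _ _),
              intervalIntegral.integral_add_adjacent_intervals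
                (hgcont.intervalIntegrable _ _) (hgcont.intervalIntegrable _ _)]
      _ = ∫ s in (-r)..r, (r ^ k - |s| ^ k) ^ 2 := by
          rw [hzero1, hzero2, hmid1, hmid2]; ring
      _ = (∫ s in (-r)..(0:ℝ), (r ^ k - |s| ^ k) ^ 2)
          + (∫ s in (0:ℝ)..r, (r ^ k - |s| ^ k) ^ 2) :=
          (intervalIntegral.integral_add_adjacent_intervals
            (hhcont.intervalIntegrable _ _) (hhcont.intervalIntegrable _ _)).symm
      _ = 2 * ∫ s in (0:ℝ)..r, (r ^ k - |s| ^ k) ^ 2 := by rw [hneg]; ring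
      _ = 2 * (r ^ (2*k) * r - 2 * r ^ k * (r ^ (k+1) / (k+1)) + r ^ (2*k+1) / (2*k+1)) := by
          rw [hdrop, hval]
      _ = 4 * k ^ 2 / ((k + 1) * (2 * k + 1)) * r ^ (2 * k + 1) := by
          rw [← hA1,
            show 2 * r ^ k * (r ^ (k+1) / (k+1)) = 2 * (r ^ k * r ^ (k+1)) / (k+1) by ring,
            ← hA2]
          have h1 : (k:ℝ) + 1 ≠ 0 := by linarith
          have h2 : 2*k + 1 ≠ 0 := by linarith
          field_simp
          ring


lemma pert (k u u' : ℝ) (hk : 1 ≤ k) (h : u ≤ u') :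
    (∫ t in (0:ℝ)..1, (max (u' - |t - 1/2| ^ k) 0) ^ 2)
      ≤ (∫ t in (0:ℝ)..1, (max (u - |t - 1/2| ^ k) 0) ^ 2)
        + (2 * max u 0 * (u' - u) + (u' - u) ^ 2) := by
  have hk0 : (0:ℝ) < k := lt_of_lt_of_le one_pos hk
  have habs : Continuous fun t : ℝ => |t - 1/2| ^ k := cont_F k hk0.le
  have hc1 : Continuous fun t : ℝ => (max (u' - |t - 1/2| ^ k) 0) ^ 2 :=
    ((continuous_const.sub habs).max continuous_const).pow 2
  have hc2 : Continuous fun t : ℝ => (max (u - |t - 1/2| ^ k) 0) ^ 2 :=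
    ((continuous_const.sub habs).max continuous_const).pow 2
  have hpt : ∀ t ∈ Set.Icc (0:ℝ) 1,
      (max (u' - |t - 1/2| ^ k) 0) ^ 2
        ≤ (max (u - |t - 1/2| ^ k) 0) ^ 2 + (2 * max u 0 * (u' - u) + (u' - u) ^ 2) := by
    intro t _
    set F := |t - 1/2| ^ k with hFt
    have hF0 : 0 ≤ F := Real.rpow_nonneg (abs_nonneg _) k
    have h1 : max (u' - F) 0 ≤ max (u - F) 0 + (u' - u) :=
      max_le (by linarith [le_max_left (u - F) 0]) (by linarith [le_max_right (u - F) 0])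
    have h2 : max (u - F) 0 ≤ max u 0 :=
      max_le (le_max_of_le_left (by linarith)) (le_max_right _ _)
    have h3 : (0:ℝ) ≤ max (u' - F) 0 := le_max_right _ _
    have h4 := pow_le_pow_left₀ h3 h1 2
    have hd : 0 ≤ u' - u := by linarith
    nlinarith [h2, h4, hd, le_max_right (u - F) 0]
  have hmono := intervalIntegral.integral_mono_on (by norm_num : (0:ℝ) ≤ 1)
    (hc1.intervalIntegrable _ _)
    ((hc2.intervalIntegrable _ _).add ((intervalIntegrable_const (μ := volume)))) hpt
  rwa [intervalIntegral.integral_add (hc2.intervalIntegrable _ _) intervalIntegrable_const,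
    intervalIntegral.integral_const, sub_zero, one_smul] at hmono

lemma big_not_mem (k ε u : ℝ) (hk : 1 ≤ k) (hε : 0 < ε) (hu : (1/2:ℝ) ^ k + ε < u) :
    ¬ (∫ t in (0:ℝ)..1, (max (u - |t - 1/2| ^ k) 0) ^ 2) ≤ ε ^ 2 := by
  have hk0 : (0:ℝ) < k := lt_of_lt_of_le one_pos hk
  have habs : Continuous fun t : ℝ => |t - 1/2| ^ k := cont_F k hk0.le
  have hc : Continuous fun t : ℝ => (max (u - |t - 1/2| ^ k) 0) ^ 2 :=
    ((continuous_const.sub habs).max continuous_const).pow 2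
  intro hle
  have hB : (0:ℝ) ≤ (1/2:ℝ) ^ k := Real.rpow_nonneg (by norm_num) k
  have hpt : ∀ t ∈ Set.Icc (0:ℝ) 1,
      (u - (1/2:ℝ) ^ k) ^ 2 ≤ (max (u - |t - 1/2| ^ k) 0) ^ 2 := by
    intro t ht
    have hF : |t - 1/2| ^ k ≤ (1/2:ℝ) ^ k :=
      Real.rpow_le_rpow (abs_nonneg _)
        (abs_le.mpr ⟨by linarith [ht.1], by linarith [ht.2]⟩) hk0.le
    have h0 : 0 ≤ u - (1/2:ℝ) ^ k := by linarith
    exact pow_le_pow_left₀ h0 (by linarith [le_max_left (u - |t - 1/2| ^ k) 0]) 2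
  have hint := intervalIntegral.integral_mono_on (by norm_num : (0:ℝ) ≤ 1)
    (intervalIntegrable_const (μ := volume)) (hc.intervalIntegrable _ _) hpt
  rw [intervalIntegral.integral_const, sub_zero, one_smul] at hint
  nlinarith [hint, hle]

end Stmt10Aux

/-- ρ_z(ε; f) for f(t) = |t-1/2|^k when ε is small (level set within [0,1]). -/
theorem stmt10 (k ε : ℝ) (hk : 1 ≤ k) (hε : 0 < ε)
    (hsmall : rhoM ε (fun t => |t - 1/2| ^ k) 0 ≤ (1/2 : ℝ) ^ k) :
    rhoZ ε (fun t => |t - 1/2| ^ k) (1/2) 0 =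
      min ((((2*k+1) * (k+1)) / (4 * k ^ 2)) ^ ((1:ℝ)/(2*k+1)) * ε ^ ((2:ℝ)/(2*k+1)))
        (1/2) := by
  classical
  have hk0 : (0:ℝ) < k := lt_of_lt_of_le one_pos hk
  have h2k1 : (0:ℝ) < 2*k+1 := by linarith
  have hCpos : (0:ℝ) < 4 * k ^ 2 / ((k + 1) * (2 * k + 1)) := by
    apply div_pos (by nlinarith) (by nlinarith)
  set C : ℝ := 4 * k ^ 2 / ((k + 1) * (2 * k + 1)) with hC
  set R : ℝ := (((2*k+1) * (k+1)) / (4 * k ^ 2)) ^ ((1:ℝ)/(2*k+1)) * ε ^ ((2:ℝ)/(2*k+1))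
    with hRdef
  have hbase : ((2*k+1) * (k+1)) / (4 * k ^ 2) = C⁻¹ := by rw [hC, inv_div]; ring
  have hRpos : 0 < R := by
    rw [hRdef, hbase]
    exact mul_pos (Real.rpow_pos_of_pos (inv_pos.mpr hCpos) _)
      (Real.rpow_pos_of_pos hε _)
  have hRpow : C * R ^ (2*k+1) = ε ^ 2 := by
    have e1 : R ^ (2*k+1) = C⁻¹ * ε ^ 2 := by
      rw [hRdef, hbase,
        Real.mul_rpow (Real.rpow_nonneg (inv_nonneg.mpr hCpos.le) _)
          (Real.rpow_nonneg hε.le _),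
        ← Real.rpow_mul (inv_nonneg.mpr hCpos.le), ← Real.rpow_mul hε.le,
        div_mul_cancel₀ (1:ℝ) h2k1.ne', div_mul_cancel₀ (2:ℝ) h2k1.ne',
        Real.rpow_one, Real.rpow_two]
    rw [e1]
    field_simp
  set S : Set ℝ := {v | ∃ u, v = u - 0 ∧
      L2 (fun t => |t - 1/2| ^ k) (trunc (fun t => |t - 1/2| ^ k) u) ≤ ε} with hSdef
  have hrhoM : rhoM ε (fun t => |t - 1/2| ^ k) 0 = sSup S := rfl
  have hmemS : ∀ u : ℝ, u ∈ S ↔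
      (∫ t in (0:ℝ)..1, (max (u - |t - 1/2| ^ k) 0) ^ 2) ≤ ε ^ 2 := by
    intro u
    constructor
    · rintro ⟨u', he, hL⟩
      have : u' = u := by rw [he]; ring
      rw [← this]
      exact (Stmt10Aux.mem_S_iff k ε u' hε).mp hL
    · intro h
      exact ⟨u, (sub_zero u).symm, (Stmt10Aux.mem_S_iff k ε u hε).mpr h⟩
  have hBdd : BddAbove S := by
    refine ⟨(1/2:ℝ) ^ k + ε, fun v hv => ?_⟩
    by_contra hlt
    push_neg at hlt
    exact Stmt10Aux.big_not_mem k ε v hk hε hlt ((hmemS v).mp hv)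
  set ρ : ℝ := min R (1/2:ℝ) with hρdef
  have hρpos : 0 < ρ := lt_min hRpos (by norm_num)
  have hρle : ρ ≤ 1/2 := min_le_right _ _
  have hu0mem : ρ ^ k ∈ S := by
    rw [hmemS, Stmt10Aux.key_integral k ρ hk hρpos.le hρle, ← hC, ← hRpow]
    exact mul_le_mul_of_nonneg_left
      (Real.rpow_le_rpow hρpos.le (min_le_left _ _) h2k1.le) hCpos.le
  have hustar_ge : ρ ^ k ≤ sSup S := le_csSup hBdd hu0mem
  have hustar_le_half : sSup S ≤ (1/2:ℝ) ^ k := by rw [← hrhoM]; exact hsmall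
  have hustar_pos : 0 < sSup S := lt_of_lt_of_le (Real.rpow_pos_of_pos hρpos k) hustar_ge
  have hSne : S.Nonempty := ⟨_, hu0mem⟩
  have hhalfk : ((1:ℝ)/2) ^ k ≤ 1/2 := by
    calc ((1:ℝ)/2) ^ k ≤ ((1:ℝ)/2) ^ (1:ℝ) :=
          Real.rpow_le_rpow_of_exponent_ge (by norm_num) (by norm_num) hk
      _ = 1/2 := Real.rpow_one _
  have hIstar : (∫ t in (0:ℝ)..1, (max (sSup S - |t - 1/2| ^ k) 0) ^ 2) ≤ ε ^ 2 := by
    by_contra hgt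
    push_neg at hgt
    set I : ℝ := ∫ t in (0:ℝ)..1, (max (sSup S - |t - 1/2| ^ k) 0) ^ 2 with hIdef
    set η : ℝ := I - ε ^ 2 with hηdef
    have hηpos : 0 < η := by rw [hηdef]; linarith
    set δ : ℝ := min (η/3) 1 with hδdef
    have hδpos : 0 < δ := lt_min (by linarith) one_pos
    have hδ1 : δ ≤ 1 := min_le_right _ _
    have hδη : δ ≤ η/3 := min_le_left _ _
    obtain ⟨u, huS, hu⟩ := exists_lt_of_lt_csSup hSne
      (show sSup S - δ < sSup S by linarith)
    have hule : u ≤ sSup S := le_csSup hBdd huS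
    have h1 := Stmt10Aux.pert k u (sSup S) hk hule
    have h2 : (∫ t in (0:ℝ)..1, (max (u - |t - 1/2| ^ k) 0) ^ 2) ≤ ε ^ 2 :=
      (hmemS u).mp huS
    have h3 : max u 0 ≤ 1/2 :=
      max_le (le_trans hule (le_trans hustar_le_half hhalfk)) (by norm_num)
    have h4 : sSup S - u < δ := by linarith
    have h5 : 0 ≤ sSup S - u := by linarith
    have h6 : (0:ℝ) ≤ max u 0 := le_max_right _ _
    have hkey : I ≤ ε ^ 2 + 2 * max u 0 * (sSup S - u) + (sSup S - u) ^ 2 := by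
      rw [hIdef]; linarith [h1, h2]
    nlinarith [hkey, h3, h4, h5, h6, hδ1, hδη, hηpos]
  have hustar_le : sSup S ≤ ρ ^ k := by
    rcases le_total R (1/2:ℝ) with hcase | hcase
    · have hρR : ρ = R := min_eq_left hcase
      set r : ℝ := (sSup S) ^ (k⁻¹) with hrdef
      have hrk : r ^ k = sSup S := by
        rw [hrdef, ← Real.rpow_mul hustar_pos.le, inv_mul_cancel₀ hk0.ne', Real.rpow_one]
      have hr0 : 0 ≤ r := Real.rpow_nonneg hustar_pos.le _
      have hrhalf : r ≤ 1/2 := by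
        have h := Real.rpow_le_rpow hustar_pos.le hustar_le_half (inv_nonneg.mpr hk0.le)
        rw [← Real.rpow_mul (by norm_num : (0:ℝ) ≤ 1/2),
          mul_inv_cancel₀ hk0.ne', Real.rpow_one] at h
        exact h
      have hkey := Stmt10Aux.key_integral k r hk hr0 hrhalf
      rw [hrk, ← hC] at hkey
      have hIr : C * r ^ (2*k+1) ≤ C * R ^ (2*k+1) := by
        rw [hRpow, ← hkey]; exact hIstar
      have hrR : r ≤ R := by
        by_contra hgt
        push_neg at hgt
        have := Real.rpow_lt_rpow hRpos.le hgt h2k1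
        have h' := (mul_le_mul_iff_right₀ hCpos).mp hIr
        linarith
      calc sSup S = r ^ k := hrk.symm
        _ ≤ R ^ k := Real.rpow_le_rpow hr0 hrR hk0.le
        _ = ρ ^ k := by rw [hρR]
    · have hρ2 : ρ = 1/2 := min_eq_right hcase
      rw [hρ2]
      exact hustar_le_half
  have hustar : sSup S = ρ ^ k := le_antisymm hustar_le hustar_ge
  -- now compute rhoZ
  have hgoal : rhoZ ε (fun t => |t - 1/2| ^ k) (1/2) 0 = ρ := by
    rw [rhoZ]
    have hset : {v | ∃ t ∈ Icc (0:ℝ) 1, v = |t - 1/2| ∧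
        (fun t => |t - 1/2| ^ k) t ≤ rhoM ε (fun t => |t - 1/2| ^ k) 0 + 0}
        = {v | ∃ t ∈ Icc (0:ℝ) 1, v = |t - 1/2| ∧ |t - 1/2| ^ k ≤ ρ ^ k} := by
      ext v
      simp only [mem_setOf_eq, hrhoM, hustar, add_zero]
    rw [hset]
    have hTmem : ρ ∈ {v | ∃ t ∈ Icc (0:ℝ) 1, v = |t - 1/2| ∧ |t - 1/2| ^ k ≤ ρ ^ k} := by
      refine ⟨1/2 + ρ, ⟨by linarith, by linarith⟩, ?_, ?_⟩
      · rw [show (1:ℝ)/2 + ρ - 1/2 = ρ by ring, abs_of_nonneg hρpos.le]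
      · rw [show (1:ℝ)/2 + ρ - 1/2 = ρ by ring, abs_of_nonneg hρpos.le]
    have hTub : ∀ v ∈ {v | ∃ t ∈ Icc (0:ℝ) 1, v = |t - 1/2| ∧ |t - 1/2| ^ k ≤ ρ ^ k},
        v ≤ ρ := by
      rintro v ⟨t, _, rfl, hFt⟩
      by_contra hlt
      push_neg at hlt
      have := Real.rpow_lt_rpow hρpos.le hlt hk0
      linarith
    exact le_antisymm (csSup_le ⟨ρ, hTmem⟩ hTub) (le_csSup ⟨ρ, hTub⟩ hTmem)
  rw [hgoal, hρdef]
end
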